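/- arXiv:1205.4482 — 11 statements merged into one kernel-verified Lean document; each statement's English description precedes it below -/
import Mathlib

section
/- Let X be a real Banach space and A : X ⇉ X* a maximally monotone operator. Then the norm closure of the convex hull of dom A equals the norm closure of the projection onto X of the domain of the Fitzpatrick function of A: cl(conv(dom A)) = cl(P_X[dom F_A]). -/
open Set

noncomputable section

variable {X : Type*}

/-- The domain of a set-valued operator `A : X ⇉ X*`, identified with its graph. -/
def opDom [NormedAddCommGroup X] [NormedSpace ℝ X]
    (A : Set (X × (X →L[ℝ] ℝ))) : Set X := Prod.fst '' A

/-- The range of a set-valued operator. -/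
def opRan [NormedAddCommGroup X] [NormedSpace ℝ X]
    (A : Set (X × (X →L[ℝ] ℝ))) : Set (X →L[ℝ] ℝ) := Prod.snd '' A

/-- `(x, x*)` is monotonically related to the set `S ⊆ X × X*`:
`⟨x − y, x* − y*⟩ ≥ 0` for all `(y, y*) ∈ S`. -/
def MonRel [NormedAddCommGroup X] [NormedSpace ℝ X]
    (p : X × (X →L[ℝ] ℝ)) (S : Set (X × (X →L[ℝ] ℝ))) : Prop :=
  ∀ q ∈ S, 0 ≤ (p.2 - q.2) (p.1 - q.1)

/-- `A` is a monotone operator (identified with its graph). -/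
def IsMonotoneOp [NormedAddCommGroup X] [NormedSpace ℝ X]
    (A : Set (X × (X →L[ℝ] ℝ))) : Prop :=
  ∀ p ∈ A, MonRel p A

/-- `A` is maximally monotone: it is monotone and every monotonically related
pair already belongs to the graph. -/
def IsMaxMonotoneOp [NormedAddCommGroup X] [NormedSpace ℝ X]
    (A : Set (X × (X →L[ℝ] ℝ))) : Prop :=
  IsMonotoneOp A ∧ ∀ p : X × (X →L[ℝ] ℝ), MonRel p A → p ∈ A

/-- The Fitzpatrick function of `A`, with values in `(-∞, +∞]` (modeled in `EReal`):
`F_A(x, x*) = sup_{(a,a*) ∈ A} (⟨a, x*⟩ + ⟨x, a*⟩ − ⟨a, a*⟩)`. -/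
def fitz [NormedAddCommGroup X] [NormedSpace ℝ X]
    (A : Set (X × (X →L[ℝ] ℝ))) (x : X) (x' : X →L[ℝ] ℝ) : EReal :=
  ⨆ a ∈ A, ((x' a.1 + a.2 x - a.2 a.1 : ℝ) : EReal)

/-- The domain of the Fitzpatrick function: the set of pairs where `F_A < +∞`. -/
def fitzDom [NormedAddCommGroup X] [NormedSpace ℝ X]
    (A : Set (X × (X →L[ℝ] ℝ))) : Set (X × (X →L[ℝ] ℝ)) :=
  {q | fitz A q.1 q.2 < ⊤}

/-- `J_p(x) = (1/p) ∂‖·‖^p (x)`, the subdifferential at `x` of `y ↦ ‖y‖^p / p`. -/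
def Jmap [NormedAddCommGroup X] [NormedSpace ℝ X]
    (p : ℝ) (x : X) : Set (X →L[ℝ] ℝ) :=
  {x' | ∀ y : X, x' (y - x) + ‖x‖ ^ p / p ≤ ‖y‖ ^ p / p}

/-- The graph of the operator `A + λ J_p(· − z)`. -/
def sumGraph [NormedAddCommGroup X] [NormedSpace ℝ X]
    (A : Set (X × (X →L[ℝ] ℝ))) (lam p : ℝ) (z : X) :
    Set (X × (X →L[ℝ] ℝ)) :=
  {q | ∃ a' b' : X →L[ℝ] ℝ, (q.1, a') ∈ A ∧ b' ∈ Jmap p (q.1 - z) ∧ q.2 = a' + lam • b'}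

lemma ereal_le_real_of_lt_top (e : EReal) (h : e < ⊤) : ∃ M : ℝ, e ≤ (M : EReal) := by
  induction e with
  | bot => exact ⟨0, bot_le⟩
  | coe r => exact ⟨r, le_refl _⟩
  | top => exact absurd h (lt_irrefl _)

/-- Theorem (Borwein–Yao): for a maximally monotone operator `A` on a real Banach
space, `cl(conv(dom A)) = cl(P_X[dom F_A])`. -/
theorem closure_convexHull_dom_eq_closure_proj_fitzDom
    [NormedAddCommGroup X] [NormedSpace ℝ X] [CompleteSpace X]
    (A : Set (X × (X →L[ℝ] ℝ))) (hA : IsMaxMonotoneOp A) :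
    closure (convexHull ℝ (opDom A)) = closure (Prod.fst '' fitzDom A) := by
  obtain ⟨hmono, hmax⟩ := hA
  -- dom A ⊆ P_X (dom F_A)
  have hdomsub : opDom A ⊆ Prod.fst '' fitzDom A := by
    rintro x ⟨⟨a, a'⟩, haA, rfl⟩
    refine ⟨(a, a'), ?_, rfl⟩
    have hb : fitz A a a' ≤ ((a' a : ℝ) : EReal) := by
      refine iSup₂_le fun b hb => ?_
      rw [EReal.coe_le_coe_iff]
      have h0 := hmono _ haA b hb
      simp only [ContinuousLinearMap.sub_apply, map_sub] at h0
      linarith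
    exact lt_of_le_of_lt hb (EReal.coe_lt_top _)
  -- fitzDom is convex
  have hconvDom : Convex ℝ (fitzDom A) := by
    intro p hp q hq t s ht hs hts
    obtain ⟨M, hM⟩ := ereal_le_real_of_lt_top _ hp
    obtain ⟨N, hN⟩ := ereal_le_real_of_lt_top _ hq
    have hle : fitz A (t • p + s • q).1 (t • p + s • q).2 ≤ ((t * M + s * N : ℝ) : EReal) := by
      refine iSup₂_le fun b hb => ?_
      have h1 : ((p.2 b.1 + b.2 p.1 - b.2 b.1 : ℝ) : EReal) ≤ (M : EReal) :=
        le_trans (le_iSup₂ (f := fun a ( _ : a ∈ A) =>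
          ((p.2 a.1 + a.2 p.1 - a.2 a.1 : ℝ) : EReal)) b hb) hM
      have h2 : ((q.2 b.1 + b.2 q.1 - b.2 b.1 : ℝ) : EReal) ≤ (N : EReal) :=
        le_trans (le_iSup₂ (f := fun a ( _ : a ∈ A) =>
          ((q.2 a.1 + a.2 q.1 - a.2 a.1 : ℝ) : EReal)) b hb) hN
      rw [EReal.coe_le_coe_iff] at h1 h2 ⊢
      simp only [Prod.fst_add, Prod.snd_add, Prod.smul_fst, Prod.smul_snd,
        ContinuousLinearMap.add_apply, ContinuousLinearMap.smul_apply, map_add, map_smul,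
        smul_eq_mul]
      have e1 : t * (p.2 b.1 + b.2 p.1 - b.2 b.1) ≤ t * M := mul_le_mul_of_nonneg_left h1 ht
      have e2 : s * (q.2 b.1 + b.2 q.1 - b.2 b.1) ≤ s * N := mul_le_mul_of_nonneg_left h2 hs
      have hsum : (t + s) * b.2 b.1 = b.2 b.1 := by rw [hts, one_mul]
      nlinarith [e1, e2, hsum]
    exact lt_of_le_of_lt hle (EReal.coe_lt_top _)
  have hconvIm : Convex ℝ (Prod.fst '' fitzDom A) := by
    have := hconvDom.linear_image (LinearMap.fst ℝ X (X →L[ℝ] ℝ))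
    simpa using this
  -- P_X (dom F_A) ⊆ cl conv dom A
  have hsub2 : Prod.fst '' fitzDom A ⊆ closure (convexHull ℝ (opDom A)) := by
    rintro x ⟨⟨x1, x'⟩, hx, rfl⟩
    by_contra hxS
    obtain ⟨f, u, hfu, hux⟩ := geometric_hahn_banach_closed_point
      ((convex_convexHull ℝ (opDom A)).closure) isClosed_closure hxS
    have hεpos : 0 < f x1 - u := sub_pos.mpr hux
    obtain ⟨M, hM⟩ := ereal_le_real_of_lt_top _ hx
    obtain ⟨n, hn⟩ := exists_nat_gt ((M - x' x1) / (f x1 - u))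
    have hxnot : ∀ a' : X →L[ℝ] ℝ, (x1, a') ∉ A := by
      intro a' ha'
      exact hxS (subset_closure (subset_convexHull ℝ _ ⟨(x1, a'), ha', rfl⟩))
    have hnm : ¬ MonRel (x1, x' + (n : ℝ) • f) A := fun h => hxnot _ (hmax _ h)
    rw [MonRel] at hnm; push_neg at hnm
    obtain ⟨b, hbA, hb⟩ := hnm
    have hfb : u < f b.1 → False := by
      intro h
      exact absurd (hfu b.1 (subset_closure (subset_convexHull ℝ _ ⟨b, hbA, rfl⟩))) (not_lt.mpr h.le)
    have hfb' : f b.1 < u := hfu b.1 (subset_closure (subset_convexHull ℝ _ ⟨b, hbA, rfl⟩))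
    have hterm : ((x' b.1 + b.2 x1 - b.2 b.1 : ℝ) : EReal) ≤ (M : EReal) :=
      le_trans (le_iSup₂ (f := fun a ( _ : a ∈ A) =>
        ((x' a.1 + a.2 x1 - a.2 a.1 : ℝ) : EReal)) b hbA) hM
    rw [EReal.coe_le_coe_iff] at hterm
    have hnε : M - x' x1 < (n : ℝ) * (f x1 - u) := (div_lt_iff₀ hεpos).mp hn
    simp only [ContinuousLinearMap.sub_apply, ContinuousLinearMap.add_apply,
      ContinuousLinearMap.smul_apply, map_sub, smul_eq_mul] at hb
    have hfmul : (n : ℝ) * (f x1 - u) ≤ (n : ℝ) * (f x1 - f b.1) :=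
      mul_le_mul_of_nonneg_left (by linarith) (Nat.cast_nonneg n)
    linarith
  refine Set.Subset.antisymm ?_ (closure_minimal hsub2 isClosed_closure)
  exact closure_mono (convexHull_min hdomsub hconvIm)
end
end

section
/- Let X be a real Banach space, 1 ≤ p < ∞, and A : X ⇉ X* a monotone operator with nonempty graph. Suppose that for every z ∉ cl(dom A) and all sufficiently large λ > 0, the pair (z,0) is not monotonically related to the graph of A + λ J_p(· − z). Then cl(dom A) = cl(conv(dom A)) = cl(P_X[dom F_A]); in particular cl(dom A) is convex. -/
open Set

noncomputable section

variable {X : Type*}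

section AuxProof

variable [NormedAddCommGroup X] [NormedSpace ℝ X]

lemma fitz_le_of_mem' {A : Set (X × (X →L[ℝ] ℝ))} {a : X × (X →L[ℝ] ℝ)} (ha : a ∈ A)
    (x : X) (x' : X →L[ℝ] ℝ) :
    ((x' a.1 + a.2 x - a.2 a.1 : ℝ) : EReal) ≤ fitz A x x' :=
  le_iSup₂ (f := fun a (_ : a ∈ A) => ((x' a.1 + a.2 x - a.2 a.1 : ℝ) : EReal)) a ha

lemma exists_bound_of_fitzDom' {A : Set (X × (X →L[ℝ] ℝ))} (hne : A.Nonempty)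
    {x : X} {x' : X →L[ℝ] ℝ} (hq : fitz A x x' < ⊤) :
    ∃ M : ℝ, ∀ a ∈ A, x' a.1 + a.2 x - a.2 a.1 ≤ M := by
  refine ⟨(fitz A x x').toReal, fun a ha => ?_⟩
  have h1 := fitz_le_of_mem' ha x x'
  have h2 : fitz A x x' ≤ ((fitz A x x').toReal : EReal) := EReal.le_coe_toReal hq.ne
  exact_mod_cast h1.trans h2

lemma opDom_subset_fitz' {A : Set (X × (X →L[ℝ] ℝ))} (hmono : IsMonotoneOp A) :
    opDom A ⊆ Prod.fst '' fitzDom A := by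
  rintro _ ⟨⟨u, u'⟩, ha, rfl⟩
  refine ⟨(u, u'), ?_, rfl⟩
  have hle : fitz A u u' ≤ ((u' u : ℝ) : EReal) := by
    refine iSup₂_le fun a haA => ?_
    have h0 := hmono (u, u') ha a haA
    simp only [ContinuousLinearMap.sub_apply, map_sub] at h0
    exact_mod_cast (by linarith : u' a.1 + a.2 u - a.2 a.1 ≤ u' u)
  exact lt_of_le_of_lt hle (EReal.coe_lt_top _)

lemma fitzDom_convex' {A : Set (X × (X →L[ℝ] ℝ))} (hne : A.Nonempty) :
    Convex ℝ (fitzDom A) := by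
  rintro q1 hq1 q2 hq2 s t hs ht hst
  obtain ⟨M1, hM1⟩ := exists_bound_of_fitzDom' hne hq1
  obtain ⟨M2, hM2⟩ := exists_bound_of_fitzDom' hne hq2
  have hle : fitz A (s • q1 + t • q2).1 (s • q1 + t • q2).2 ≤ ((s * M1 + t * M2 : ℝ) : EReal) := by
    refine iSup₂_le fun a haA => ?_
    have h1 := hM1 a haA
    have h2 := hM2 a haA
    have e : (s • q1 + t • q2).2 a.1 + a.2 (s • q1 + t • q2).1 - a.2 a.1
        = s * (q1.2 a.1 + a.2 q1.1 - a.2 a.1) + t * (q2.2 a.1 + a.2 q2.1 - a.2 a.1) := by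
      simp only [Prod.fst_add, Prod.snd_add, Prod.smul_fst, Prod.smul_snd,
        ContinuousLinearMap.add_apply, ContinuousLinearMap.smul_apply, map_add, map_smul,
        smul_eq_mul]
      linear_combination (a.2 a.1) * hst
    rw [EReal.coe_le_coe_iff, e]
    have := mul_le_mul_of_nonneg_left h1 hs
    have := mul_le_mul_of_nonneg_left h2 ht
    linarith
  exact lt_of_le_of_lt hle (EReal.coe_lt_top _)

lemma key_subset'
    (p : ℝ) (hp : 1 ≤ p)
    (A : Set (X × (X →L[ℝ] ℝ))) (hne : A.Nonempty)
    (h : ∀ z ∉ closure (opDom A), ∃ Λ : ℝ, 0 < Λ ∧ ∀ lam : ℝ, Λ ≤ lam →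
      ¬ MonRel (z, (0 : X →L[ℝ] ℝ)) (sumGraph A lam p z)) :
    Prod.fst '' fitzDom A ⊆ closure (opDom A) := by
  rintro _ ⟨⟨z, z'⟩, hq, rfl⟩
  by_contra hz
  obtain ⟨Λ, hΛ, hlamH⟩ := h z hz
  have hp0 : 0 < p := lt_of_lt_of_le one_pos hp
  have hdomne : (opDom A).Nonempty := hne.image _
  set d := Metric.infDist z (opDom A) with hdd
  have hd : 0 < d := by
    have := (isClosed_closure.notMem_iff_infDist_pos hdomne.closure).1 hz
    rwa [Metric.infDist_closure] at this
  have hdp : (0 : ℝ) < d ^ (p - 1) := Real.rpow_pos_of_pos hd _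
  -- bound from the Fitzpatrick domain
  obtain ⟨M0, hM0⟩ := exists_bound_of_fitzDom' hne (show fitz A z z' < ⊤ from hq)
  set M := max M0 (z' z) with hMdef
  have hM : ∀ a ∈ A, z' a.1 + a.2 z - a.2 a.1 ≤ M := fun a ha =>
    (hM0 a ha).trans (le_max_left _ _)
  have hMz : z' z ≤ M := le_max_right _ _
  set C := ‖z'‖ with hC
  set K := M - z' z + 1 with hK
  have hK1 : (1 : ℝ) ≤ K := by simp only [hK]; linarith
  set lam := max Λ (p * (C + K / d) / d ^ (p - 1)) with hlamdef
  have hlam0 : 0 < lam := lt_of_lt_of_le hΛ (le_max_left _ _)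
  obtain ⟨q, hqmem, hlt⟩ := by
    have := hlamH lam (le_max_left _ _)
    rw [MonRel] at this
    push_neg at this
    exact this
  obtain ⟨a', b', haA, hb, hq2⟩ := hqmem
  set x := q.1 with hx
  set t := ‖x - z‖ with ht
  have htd : d ≤ t := by
    have h1 : d ≤ dist z x := Metric.infDist_le_dist_of_mem ⟨(x, a'), haA, rfl⟩
    have : dist z x = t := by rw [dist_eq_norm, ht, norm_sub_rev]
    linarith
  have ht0 : 0 < t := lt_of_lt_of_le hd htd
  -- from J_p membership with y = 0
  have hb0 := hb 0
  have hbx : t ^ p / p ≤ b' (x - z) := by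
    have hz0 : ‖(0 : X)‖ ^ p / p = 0 := by
      rw [norm_zero, Real.zero_rpow (ne_of_gt hp0), zero_div]
    rw [hz0] at hb0
    have : b' (0 - (x - z)) = -(b' (x - z)) := by rw [zero_sub, map_neg]
    rw [this] at hb0
    linarith
  -- expand the monotonicity failure
  have hlt' : lam * b' (x - z) < a' (z - x) := by
    rw [hq2] at hlt
    simp only [ContinuousLinearMap.sub_apply, ContinuousLinearMap.add_apply,
      ContinuousLinearMap.smul_apply, ContinuousLinearMap.zero_apply, smul_eq_mul] at hlt
    have e : b' (z - x) = -(b' (x - z)) := by rw [← neg_sub x z, map_neg]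
    have e2 : a' (z - x) = a' z - a' x := map_sub _ _ _
    rw [e] at hlt
    rw [e2, map_sub] at hlt ⊢
    linarith
  -- Fitzpatrick bound at (x, a')
  have hMx : z' x + a' z - a' x ≤ M := hM (x, a') haA
  have hzx : z' z - C * t ≤ z' x := by
    have h1 : z' (z - x) ≤ C * ‖z - x‖ :=
      le_trans (le_abs_self _) (by rw [← Real.norm_eq_abs]; exact z'.le_opNorm _)
    have h2 : ‖z - x‖ = t := by rw [ht, norm_sub_rev]
    have h3 : z' (z - x) = z' z - z' x := map_sub _ _ _
    rw [h2, h3] at h1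
    linarith
  -- t ^ p ≥ t * d ^ (p - 1)
  have htp : t * d ^ (p - 1) ≤ t ^ p := by
    have h1 : d ^ (p - 1) ≤ t ^ (p - 1) :=
      Real.rpow_le_rpow hd.le htd (by linarith)
    have h2 : t ^ p = t * t ^ (p - 1) := by
      have h3 := Real.rpow_add ht0 1 (p - 1)
      rw [Real.rpow_one] at h3
      have hpe : 1 + (p - 1) = p := by ring
      rw [hpe] at h3
      exact h3
    rw [h2]
    exact mul_le_mul_of_nonneg_left h1 ht0.le
  -- lam is large
  have hlamc : p * (C + K / d) ≤ lam * d ^ (p - 1) :=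
    (div_le_iff₀ hdp).mp (le_max_right _ _)
  have hbig : t * (C + K / d) ≤ lam * (t ^ p / p) := by
    have s1 : lam * (t * d ^ (p - 1)) ≤ lam * t ^ p :=
      mul_le_mul_of_nonneg_left htp hlam0.le
    have s2 : t * (p * (C + K / d)) ≤ t * (lam * d ^ (p - 1)) :=
      mul_le_mul_of_nonneg_left hlamc ht0.le
    have s3 : t * (lam * d ^ (p - 1)) = lam * (t * d ^ (p - 1)) := by ring
    have s4 : t * (p * (C + K / d)) ≤ lam * t ^ p := by
      rw [s3] at s2; linarith
    have s5 : t * (p * (C + K / d)) / p ≤ lam * t ^ p / p :=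
      (div_le_div_iff_of_pos_right hp0).mpr s4
    have s6 : t * (p * (C + K / d)) / p = t * (C + K / d) := by
      field_simp
    rw [s6] at s5
    have s7 : lam * t ^ p / p = lam * (t ^ p / p) := by ring
    rwa [s7] at s5
  have hKt : K ≤ t * K / d := by
    have s1 : d * K ≤ t * K := mul_le_mul_of_nonneg_right htd (by linarith)
    have s2 : d * K / d ≤ t * K / d := (div_le_div_iff_of_pos_right hd).mpr s1
    have s3 : d * K / d = K := by field_simp
    rwa [s3] at s2
  -- final contradiction
  have hfin : lam * (t ^ p / p) ≤ a' (z - x) := le_of_lt (by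
    have := mul_le_mul_of_nonneg_left hbx hlam0.le
    linarith)
  have e2 : a' (z - x) = a' z - a' x := map_sub _ _ _
  have hchain : z' z - C * t + (t * C + t * (K / d)) ≤ M := by
    have : t * (C + K / d) = t * C + t * (K / d) := by ring
    rw [this] at hbig
    rw [e2] at hfin
    linarith
  have : t * (K / d) = t * K / d := by ring
  rw [this] at hchain
  linarith

end AuxProof

/-- Proposition (domain near convexity): if `A` is monotone with nonempty graph and,
for every `z ∉ cl(dom A)` and all sufficiently large `λ > 0`, the pair `(z, 0)` is not
monotonically related to `gra (A + λ J_p(· − z))`, then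
`cl(dom A) = cl(conv(dom A)) = cl(P_X[dom F_A])`; in particular `cl(dom A)` is convex. -/
theorem nearly_convex_of_not_monRel
    [NormedAddCommGroup X] [NormedSpace ℝ X] [CompleteSpace X]
    (p : ℝ) (hp : 1 ≤ p)
    (A : Set (X × (X →L[ℝ] ℝ))) (hne : A.Nonempty) (hmono : IsMonotoneOp A)
    (h : ∀ z ∉ closure (opDom A), ∃ Λ : ℝ, 0 < Λ ∧ ∀ lam : ℝ, Λ ≤ lam →
      ¬ MonRel (z, (0 : X →L[ℝ] ℝ)) (sumGraph A lam p z)) :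
    closure (opDom A) = closure (convexHull ℝ (opDom A)) ∧
    closure (opDom A) = closure (Prod.fst '' fitzDom A) ∧
    Convex ℝ (closure (opDom A)) := by
  have hsub1 : opDom A ⊆ Prod.fst '' fitzDom A := opDom_subset_fitz' hmono
  have hconv : Convex ℝ (Prod.fst '' fitzDom A) := by
    have := (fitzDom_convex' hne (A := A)).linear_image
      (LinearMap.fst ℝ X (X →L[ℝ] ℝ))
    simpa using this
  have hsub2 : convexHull ℝ (opDom A) ⊆ Prod.fst '' fitzDom A :=
    convexHull_min hsub1 hconv
  have hkey : Prod.fst '' fitzDom A ⊆ closure (opDom A) := key_subset' p hp A hne h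
  have e2 : closure (opDom A) = closure (Prod.fst '' fitzDom A) :=
    subset_antisymm (closure_mono hsub1) (closure_minimal hkey isClosed_closure)
  have e1 : closure (opDom A) = closure (convexHull ℝ (opDom A)) :=
    subset_antisymm (closure_mono (subset_convexHull ℝ _))
      (closure_minimal (hsub2.trans hkey) isClosed_closure)
  refine ⟨e1, e2, ?_⟩
  rw [e1]
  exact (convex_convexHull ℝ _).closure
end
end

section
/- Let X be a real Banach space and A : X ⇉ X* a monotone operator with nonempty graph. Assume that for every z ∉ cl(conv(dom A)) one has sup_{(a,a*)∈gra A} ⟨z − a, a*⟩/‖z − a‖ = +∞. Then cl(conv(dom A)) = cl(P_X[dom F_A]). -/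
open Set

noncomputable section

variable {X : Type*}

lemma fitz_lt_top_iff [NormedAddCommGroup X] [NormedSpace ℝ X]
    (A : Set (X × (X →L[ℝ] ℝ))) (x : X) (x' : X →L[ℝ] ℝ) :
    fitz A x x' < ⊤ ↔ ∃ r : ℝ, ∀ a ∈ A, x' a.1 + a.2 x - a.2 a.1 ≤ r := by
  constructor
  · intro hlt
    by_cases hb : fitz A x x' = ⊥
    · refine ⟨0, fun a ha => ?_⟩
      have h1 : ((x' a.1 + a.2 x - a.2 a.1 : ℝ) : EReal) ≤ fitz A x x' :=
        le_iSup₂ (f := fun a (_ : a ∈ A) => ((x' a.1 + a.2 x - a.2 a.1 : ℝ) : EReal)) a ha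
      rw [hb] at h1
      exact absurd h1 (EReal.bot_lt_coe _).not_ge
    · refine ⟨(fitz A x x').toReal, fun a ha => ?_⟩
      have h1 : ((x' a.1 + a.2 x - a.2 a.1 : ℝ) : EReal) ≤ fitz A x x' :=
        le_iSup₂ (f := fun a (_ : a ∈ A) => ((x' a.1 + a.2 x - a.2 a.1 : ℝ) : EReal)) a ha
      rw [← EReal.coe_toReal hlt.ne hb] at h1
      exact_mod_cast h1
  · rintro ⟨r, hr⟩
    refine lt_of_le_of_lt (iSup₂_le fun a ha => ?_) (EReal.coe_lt_top r)
    exact_mod_cast hr a ha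

lemma opDom_subset_proj_fitzDom [NormedAddCommGroup X] [NormedSpace ℝ X]
    (A : Set (X × (X →L[ℝ] ℝ))) (hmono : IsMonotoneOp A) :
    opDom A ⊆ Prod.fst '' fitzDom A := by
  rintro x ⟨p, hp, rfl⟩
  refine ⟨p, ?_, rfl⟩
  rw [fitzDom, mem_setOf_eq, fitz_lt_top_iff]
  refine ⟨p.2 p.1, fun a ha => ?_⟩
  have := hmono p hp a ha
  simp only [ContinuousLinearMap.sub_apply, map_sub] at this
  linarith

lemma proj_fitzDom_convex [NormedAddCommGroup X] [NormedSpace ℝ X]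
    (A : Set (X × (X →L[ℝ] ℝ))) :
    Convex ℝ (Prod.fst '' fitzDom A) := by
  rintro x ⟨p, hp, rfl⟩ y ⟨q, hq, rfl⟩ t s ht hs hts
  rw [fitzDom, mem_setOf_eq, fitz_lt_top_iff] at hp hq
  obtain ⟨r₁, hr₁⟩ := hp
  obtain ⟨r₂, hr₂⟩ := hq
  refine ⟨(t • p.1 + s • q.1, t • p.2 + s • q.2), ?_, rfl⟩
  rw [fitzDom, mem_setOf_eq, fitz_lt_top_iff]
  refine ⟨t * r₁ + s * r₂, fun a ha => ?_⟩
  have h1 := hr₁ a ha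
  have h2 := hr₂ a ha
  have e1 := mul_le_mul_of_nonneg_left h1 ht
  have e2 := mul_le_mul_of_nonneg_left h2 hs
  simp only [ContinuousLinearMap.add_apply, ContinuousLinearMap.smul_apply, map_add,
    map_smul, smul_eq_mul]
  have hsplit : a.2 a.1 = t * a.2 a.1 + s * a.2 a.1 := by rw [← add_mul, hts, one_mul]
  linarith

lemma proj_fitzDom_subset [NormedAddCommGroup X] [NormedSpace ℝ X]
    (A : Set (X × (X →L[ℝ] ℝ)))
    (h : ∀ z ∉ closure (convexHull ℝ (opDom A)), ∀ M : ℝ,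
      ∃ a ∈ A, M < a.2 (z - a.1) / ‖z - a.1‖) :
    Prod.fst '' fitzDom A ⊆ closure (convexHull ℝ (opDom A)) := by
  rintro x ⟨p, hp, rfl⟩
  by_contra hx
  rw [fitzDom, mem_setOf_eq, fitz_lt_top_iff] at hp
  obtain ⟨r, hr⟩ := hp
  -- distance bound: p.1 is not in the closure, find ε > 0
  have hx' : p.1 ∉ closure (opDom A) :=
    fun hc => hx (closure_mono (subset_convexHull ℝ _) hc)
  obtain ⟨ε, hε, hball⟩ : ∃ ε > 0, ∀ y ∈ opDom A, ε ≤ dist p.1 y := by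
    rw [Metric.mem_closure_iff] at hx'
    push_neg at hx'
    obtain ⟨ε, hε, hb⟩ := hx'
    exact ⟨ε, hε, fun y hy => hb y hy⟩
  obtain ⟨a, ha, hM⟩ := h p.1 hx (|r - p.2 p.1| / ε + ‖p.2‖)
  have hd : ε ≤ ‖p.1 - a.1‖ := by
    have := hball a.1 ⟨a, ha, rfl⟩
    rwa [dist_eq_norm] at this
  have hpos : (0:ℝ) < ‖p.1 - a.1‖ := lt_of_lt_of_le hε hd
  have hb1 : a.2 (p.1 - a.1) ≤ r - p.2 a.1 := by
    have := hr a ha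
    have : a.2 (p.1 - a.1) = a.2 p.1 - a.2 a.1 := by rw [map_sub]
    linarith [hr a ha, this]
  have hb2 : r - p.2 a.1 = r - p.2 p.1 + p.2 (p.1 - a.1) := by
    rw [map_sub]; ring
  have hb3 : p.2 (p.1 - a.1) ≤ ‖p.2‖ * ‖p.1 - a.1‖ := le_trans (le_abs_self _) (by rw [← Real.norm_eq_abs]; exact p.2.le_opNorm _)
  have hb4 : r - p.2 p.1 ≤ |r - p.2 p.1| / ε * ‖p.1 - a.1‖ := by
    have h1 : r - p.2 p.1 ≤ |r - p.2 p.1| := le_abs_self _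
    have h2 : |r - p.2 p.1| ≤ |r - p.2 p.1| / ε * ‖p.1 - a.1‖ := by
      rw [div_mul_eq_mul_div, le_div_iff₀ hε]
      exact mul_le_mul_of_nonneg_left hd (abs_nonneg _)
    linarith
  have key : a.2 (p.1 - a.1) ≤ (|r - p.2 p.1| / ε + ‖p.2‖) * ‖p.1 - a.1‖ := by
    nlinarith
  have : a.2 (p.1 - a.1) / ‖p.1 - a.1‖ ≤ |r - p.2 p.1| / ε + ‖p.2‖ := by
    rw [div_le_iff₀ hpos]; exact key
  linarith

/-- Proposition: if `A` is monotone with nonempty graph and for every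
`z ∉ cl(conv(dom A))` one has `sup_{(a,a*)∈gra A} ⟨z−a, a*⟩/‖z−a‖ = +∞`, then
`cl(conv(dom A)) = cl(P_X[dom F_A])`. -/
theorem closure_convexHull_eq_of_sup_unbounded
    [NormedAddCommGroup X] [NormedSpace ℝ X] [CompleteSpace X]
    (A : Set (X × (X →L[ℝ] ℝ))) (hne : A.Nonempty) (hmono : IsMonotoneOp A)
    (h : ∀ z ∉ closure (convexHull ℝ (opDom A)), ∀ M : ℝ,
      ∃ a ∈ A, M < a.2 (z - a.1) / ‖z - a.1‖) :
    closure (convexHull ℝ (opDom A)) = closure (Prod.fst '' fitzDom A) := by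
  apply Subset.antisymm
  · have h1 : convexHull ℝ (opDom A) ⊆ closure (Prod.fst '' fitzDom A) :=
      convexHull_min
        ((opDom_subset_proj_fitzDom A hmono).trans subset_closure)
        ((proj_fitzDom_convex A).closure)
    exact closure_minimal h1 isClosed_closure
  · exact closure_minimal (proj_fitzDom_subset A h) isClosed_closure
end
end

section
/- Let X be a real Banach space and A : X ⇉ X* a maximally monotone operator of type (FPV). Then cl(dom A) = cl(conv(dom A)) = cl(P_X[dom F_A]); in particular dom A is nearly convex (its closure is convex). -/
open Set

noncomputable section

variable {X : Type*}

section Aux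

variable [NormedAddCommGroup X] [NormedSpace ℝ X]

lemma maxMon_nonempty {A : Set (X × (X →L[ℝ] ℝ))} (hA : IsMaxMonotoneOp A) :
    A.Nonempty := by
  rcases A.eq_empty_or_nonempty with h | h
  · refine ⟨(0, 0), hA.2 (0, 0) ?_⟩
    intro q hq
    rw [h] at hq
    exact absurd hq (Set.notMem_empty q)
  · exact h

lemma fitz_term_le {A : Set (X × (X →L[ℝ] ℝ))} {x : X} {x' : X →L[ℝ] ℝ}
    (hlt : fitz A x x' < ⊤) {b : X × (X →L[ℝ] ℝ)} (hb : b ∈ A) :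
    x' b.1 + b.2 x - b.2 b.1 ≤ (fitz A x x').toReal := by
  have h1 : ((x' b.1 + b.2 x - b.2 b.1 : ℝ) : EReal) ≤ fitz A x x' :=
    le_iSup₂ (f := fun a (_ : a ∈ A) => ((x' a.1 + a.2 x - a.2 a.1 : ℝ) : EReal)) b hb
  have hbot : fitz A x x' ≠ ⊥ := by
    intro hbot
    rw [hbot, le_bot_iff] at h1
    exact EReal.coe_ne_bot _ h1
  have hrw : fitz A x x' = ((fitz A x x').toReal : EReal) :=
    (EReal.coe_toReal hlt.ne hbot).symm
  rw [hrw] at h1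
  exact EReal.coe_le_coe_iff.mp h1

lemma graph_subset_fitzDom {A : Set (X × (X →L[ℝ] ℝ))} (hA : IsMonotoneOp A)
    {p : X × (X →L[ℝ] ℝ)} (hp : p ∈ A) : p ∈ fitzDom A := by
  have hle : fitz A p.1 p.2 ≤ ((p.2 p.1 : ℝ) : EReal) := by
    refine iSup₂_le fun b hb => ?_
    rw [EReal.coe_le_coe_iff]
    have hmono := hA p hp b hb
    simp only [ContinuousLinearMap.sub_apply, map_sub] at hmono
    linarith
  exact lt_of_le_of_lt hle (EReal.coe_lt_top _)

lemma convex_proj_fitzDom {A : Set (X × (X →L[ℝ] ℝ))} :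
    Convex ℝ (Prod.fst '' fitzDom A) := by
  rintro x ⟨p, hp, rfl⟩ y ⟨q, hq, rfl⟩ t s ht hs hts
  have hp' : fitz A p.1 p.2 < ⊤ := hp
  have hq' : fitz A q.1 q.2 < ⊤ := hq
  refine ⟨(t • p.1 + s • q.1, t • p.2 + s • q.2), ?_, rfl⟩
  show fitz A (t • p.1 + s • q.1) (t • p.2 + s • q.2) < ⊤
  refine lt_of_le_of_lt (iSup₂_le fun b hb => ?_)
    (EReal.coe_lt_top (t * (fitz A p.1 p.2).toReal + s * (fitz A q.1 q.2).toReal))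
  rw [EReal.coe_le_coe_iff]
  have h1 := fitz_term_le hp' hb
  have h2 := fitz_term_le hq' hb
  have hexp : (t • p.2 + s • q.2) b.1 + b.2 (t • p.1 + s • q.1) - b.2 b.1
      = t * (p.2 b.1 + b.2 p.1 - b.2 b.1) + s * (q.2 b.1 + b.2 q.1 - b.2 b.1) := by
    simp only [ContinuousLinearMap.add_apply, ContinuousLinearMap.smul_apply, map_add,
      map_smul, smul_eq_mul]
    linear_combination (b.2 b.1) * hts
  rw [hexp]
  have := mul_le_mul_of_nonneg_left h1 ht
  have := mul_le_mul_of_nonneg_left h2 hs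
  linarith

lemma mem_closure_of_fitz_lt_top {A : Set (X × (X →L[ℝ] ℝ))} (hA : IsMaxMonotoneOp A)
    (hfpv : ∀ U : Set X, IsOpen U → Convex ℝ U → (U ∩ opDom A).Nonempty →
      ∀ q : X × (X →L[ℝ] ℝ), q.1 ∈ U →
        MonRel q (A ∩ (U ×ˢ (univ : Set (X →L[ℝ] ℝ)))) → q ∈ A)
    {z : X} {z' : X →L[ℝ] ℝ} (h : fitz A z z' < ⊤) :
    z ∈ closure (opDom A) := by
  by_contra hz
  rw [Metric.mem_closure_iff] at hz
  push_neg at hz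
  obtain ⟨d, hd, hdist⟩ := hz
  obtain ⟨p0, hp0⟩ := maxMon_nonempty hA
  have hb0 : p0.1 ∈ opDom A := ⟨p0, hp0, rfl⟩
  set b := p0.1 with hbdef
  have hzb : z - b ≠ 0 := by
    intro hzb
    have hzb' : z = b := by rwa [sub_eq_zero] at hzb
    have := hdist b hb0
    rw [← hzb', dist_self] at this
    linarith
  obtain ⟨u, hu1, hu2⟩ := exists_dual_vector ℝ (z - b) (norm_ne_zero_iff.mpr hzb)
  have hu2' : u (z - b) = ‖z - b‖ := by exact_mod_cast hu2
  set r : ℝ := d / 3 with hrdef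
  have hr : 0 < r := by positivity
  set U := Metric.thickening r (segment ℝ z b) with hUdef
  have hUopen : IsOpen U := Metric.isOpen_thickening
  have hUconv : Convex ℝ U := (convex_segment z b).thickening r
  have hzU : z ∈ U := Metric.self_subset_thickening hr _ (left_mem_segment ℝ z b)
  have hbU : b ∈ U := Metric.self_subset_thickening hr _ (right_mem_segment ℝ z b)
  set M : ℝ := (fitz A z z').toReal with hMdef
  set K : ℝ := M - z' z with hKdef
  set c : ℝ := (max K 0 + 1) / r with hcdef
  have hc : 0 < c := by positivity
  have hmon : ¬ MonRel (z, z' + c • u) (A ∩ (U ×ˢ (Set.univ : Set (X →L[ℝ] ℝ)))) := by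
    intro hmon
    have hzA := hfpv U hUopen hUconv ⟨b, hbU, hb0⟩ (z, z' + c • u) hzU hmon
    have hzD : z ∈ opDom A := ⟨_, hzA, rfl⟩
    have := hdist z hzD
    rw [dist_self] at this
    linarith
  unfold MonRel at hmon
  push_neg at hmon
  obtain ⟨q, hqmem, hneg⟩ := hmon
  obtain ⟨hqA, hqU, -⟩ := hqmem
  have hterm := fitz_term_le h hqA
  simp only [ContinuousLinearMap.sub_apply, ContinuousLinearMap.add_apply,
    ContinuousLinearMap.smul_apply, map_sub, smul_eq_mul] at hneg
  -- hneg : z' z - z' q.1 + c * (u z - u q.1) - (q.2 z - q.2 q.1) < 0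
  have hcu : c * (u z - u q.1) < K := by
    simp only [hKdef]
    linarith
  have hcr : c * r = max K 0 + 1 := div_mul_cancel₀ _ hr.ne'
  have huza : u z - u q.1 < r := by
    have h1 : c * (u z - u q.1) < c * r := by
      rw [hcr]
      calc c * (u z - u q.1) < K := hcu
        _ ≤ max K 0 := le_max_left _ _
        _ < max K 0 + 1 := by linarith
    exact lt_of_mul_lt_mul_left (by linarith) hc.le
  obtain ⟨s, hs, hdist_as⟩ := Metric.mem_thickening_iff.mp hqU
  obtain ⟨α, β, hα, hβ, hαβ, rfl⟩ := hs
  have hzs : z - (α • z + β • b) = β • (z - b) := by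
    have hα' : α = 1 - β := by linarith
    rw [hα']
    module
  have huzs : u (z - (α • z + β • b)) = β * ‖z - b‖ := by
    rw [hzs, map_smul, smul_eq_mul, hu2']
  have husa : |u ((α • z + β • b) - q.1)| ≤ ‖(α • z + β • b) - q.1‖ := by
    calc |u ((α • z + β • b) - q.1)| = ‖u ((α • z + β • b) - q.1)‖ := rfl
      _ ≤ ‖u‖ * ‖(α • z + β • b) - q.1‖ := u.le_opNorm _
      _ = ‖(α • z + β • b) - q.1‖ := by rw [hu1, one_mul]
  have hsa : ‖(α • z + β • b) - q.1‖ < r := by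
    rw [← dist_eq_norm, dist_comm]
    exact hdist_as
  have hbeta : β * ‖z - b‖ < 2 * r := by
    have hsplit : u (z - (α • z + β • b)) = (u z - u q.1) - u ((α • z + β • b) - q.1) := by
      rw [map_sub, map_sub]
      ring
    have habs := abs_le.mp husa
    rw [hsplit] at huzs
    linarith
  have hfinal : dist z q.1 < d := by
    have htri : dist z q.1 ≤ ‖z - (α • z + β • b)‖ + ‖(α • z + β • b) - q.1‖ := by
      rw [dist_eq_norm]
      calc ‖z - q.1‖ = ‖(z - (α • z + β • b)) + ((α • z + β • b) - q.1)‖ := by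
            rw [sub_add_sub_cancel]
        _ ≤ _ := norm_add_le _ _
    have hnorm1 : ‖z - (α • z + β • b)‖ = β * ‖z - b‖ := by
      rw [hzs, norm_smul, Real.norm_eq_abs, abs_of_nonneg hβ]
    rw [hnorm1] at htri
    have : dist z q.1 < 2 * r + r := by linarith
    linarith [hrdef ▸ this]
  have hqD : q.1 ∈ opDom A := ⟨q, hqA, rfl⟩
  have := hdist q.1 hqD
  linarith

end Aux

/-- Corollary: if `A` is maximally monotone of type (FPV), then
`cl(dom A) = cl(conv(dom A)) = cl(P_X[dom F_A])`; in particular `dom A` is nearly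
convex. -/
theorem nearly_convex_of_FPV
    [NormedAddCommGroup X] [NormedSpace ℝ X] [CompleteSpace X]
    (A : Set (X × (X →L[ℝ] ℝ))) (hA : IsMaxMonotoneOp A)
    (hfpv : ∀ U : Set X, IsOpen U → Convex ℝ U → (U ∩ opDom A).Nonempty →
      ∀ q : X × (X →L[ℝ] ℝ), q.1 ∈ U →
        MonRel q (A ∩ (U ×ˢ (univ : Set (X →L[ℝ] ℝ)))) → q ∈ A) :
    closure (opDom A) = closure (convexHull ℝ (opDom A)) ∧
    closure (opDom A) = closure (Prod.fst '' fitzDom A) ∧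
    Convex ℝ (closure (opDom A)) := by
  have hsub1 : opDom A ⊆ Prod.fst '' fitzDom A := by
    rintro x ⟨p, hp, rfl⟩
    exact ⟨p, graph_subset_fitzDom hA.1 hp, rfl⟩
  have hsub2 : Prod.fst '' fitzDom A ⊆ closure (opDom A) := by
    rintro x ⟨p, hp, rfl⟩
    exact mem_closure_of_fitz_lt_top hA hfpv hp
  have hsub3 : convexHull ℝ (opDom A) ⊆ Prod.fst '' fitzDom A :=
    convexHull_min hsub1 convex_proj_fitzDom
  have e2 : closure (opDom A) = closure (Prod.fst '' fitzDom A) := by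
    refine Set.Subset.antisymm (closure_mono hsub1) ?_
    have h := closure_mono hsub2
    rwa [closure_closure] at h
  have e1 : closure (opDom A) = closure (convexHull ℝ (opDom A)) := by
    refine Set.Subset.antisymm (closure_mono (subset_convexHull ℝ _)) ?_
    calc closure (convexHull ℝ (opDom A)) ⊆ closure (Prod.fst '' fitzDom A) :=
          closure_mono hsub3
      _ ⊆ closure (opDom A) := by rw [← e2]
  refine ⟨e1, e2, ?_⟩
  rw [e1]
  exact (convex_convexHull ℝ _).closure
end
end

section
/- Let X be a real Banach space and A : X ⇉ X* a maximally monotone operator with int(dom A) ≠ ∅. Then cl(dom A) = cl(conv(dom A)) = cl(P_X[dom F_A]); in particular dom A is nearly convex (its closure is convex). -/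
open Set

noncomputable section

variable {X : Type*}

section Aux

variable [NormedAddCommGroup X] [NormedSpace ℝ X]

/-- `(z, u)` is `ε`-monotonically related to `A`. -/
def Erel (A : Set (X × (X →L[ℝ] ℝ))) (z : X) (u : X →L[ℝ] ℝ) (ε : ℝ) : Prop :=
  ∀ a ∈ A, -ε ≤ (u - a.2) (z - a.1)

lemma erel_self {A : Set (X × (X →L[ℝ] ℝ))} (hA : IsMonotoneOp A) {a : X × (X →L[ℝ] ℝ)}
    (ha : a ∈ A) : Erel A a.1 a.2 0 := fun b hb => by
  simpa using hA a ha b hb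

lemma pairing_expand {z : X} {u v : X →L[ℝ] ℝ} {a : X} :
    (u - v) (z - a) = u z - (u a + v z - v a) := by
  simp only [ContinuousLinearMap.sub_apply, map_sub]
  ring

lemma erel_of_fitz_lt_top {A : Set (X × (X →L[ℝ] ℝ))} {z : X} {u : X →L[ℝ] ℝ}
    (h : fitz A z u < ⊤) : ∃ ε : ℝ, Erel A z u ε := by
  rcases eq_or_ne (fitz A z u) ⊥ with hb | hb
  · refine ⟨0, fun a ha => ?_⟩
    exfalso
    have hle : ((u a.1 + a.2 z - a.2 a.1 : ℝ) : EReal) ≤ fitz A z u :=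
      le_iSup₂ (f := fun (a : X × (X →L[ℝ] ℝ)) (_ : a ∈ A) =>
        ((u a.1 + a.2 z - a.2 a.1 : ℝ) : EReal)) a ha
    rw [hb] at hle
    exact (EReal.coe_ne_bot _) (le_bot_iff.mp hle)
  · set r := (fitz A z u).toReal with hr
    have hco : fitz A z u = (r : EReal) := (EReal.coe_toReal h.ne hb).symm
    refine ⟨r - u z, fun a ha => ?_⟩
    have hle : ((u a.1 + a.2 z - a.2 a.1 : ℝ) : EReal) ≤ fitz A z u :=
      le_iSup₂ (f := fun (a : X × (X →L[ℝ] ℝ)) (_ : a ∈ A) =>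
        ((u a.1 + a.2 z - a.2 a.1 : ℝ) : EReal)) a ha
    rw [hco] at hle
    have h2 : u a.1 + a.2 z - a.2 a.1 ≤ r := EReal.coe_le_coe_iff.mp hle
    rw [pairing_expand]
    linarith

lemma fitz_lt_top_of_erel {A : Set (X × (X →L[ℝ] ℝ))} {z : X} {u : X →L[ℝ] ℝ} {ε : ℝ}
    (h : Erel A z u ε) : fitz A z u < ⊤ := by
  have hle : fitz A z u ≤ ((u z + ε : ℝ) : EReal) := by
    refine iSup₂_le fun a ha => ?_
    have h1 := h a ha
    rw [pairing_expand] at h1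
    exact_mod_cast (by linarith : u a.1 + a.2 z - a.2 a.1 ≤ u z + ε)
  exact lt_of_le_of_lt hle (EReal.coe_lt_top _)

lemma mem_closure_convexHull_of_erel {A : Set (X × (X →L[ℝ] ℝ))} (hA : IsMaxMonotoneOp A)
    {z : X} {u : X →L[ℝ] ℝ} {ε : ℝ} (h : Erel A z u ε) :
    z ∈ closure (convexHull ℝ (opDom A)) := by
  by_contra hz
  have hCc : Convex ℝ (closure (convexHull ℝ (opDom A))) := (convex_convexHull ℝ _).closure
  obtain ⟨f, r, hfr, hrz⟩ := geometric_hahn_banach_closed_point hCc isClosed_closure hz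
  have hzD : z ∉ opDom A := fun hD => hz (subset_closure (subset_convexHull ℝ _ hD))
  have hfz : 0 < f z - r := by linarith
  set t : ℝ := (|ε| + 1) / (f z - r) with ht
  have ht0 : 0 < t := div_pos (by positivity) hfz
  have hmon : ¬ MonRel (z, u + t • f) A := by
    intro hm
    exact hzD ⟨(z, u + t • f), hA.2 _ hm, rfl⟩
  obtain ⟨a, ha, hlt⟩ : ∃ a ∈ A, (u + t • f - a.2) (z - a.1) < 0 := by
    by_contra hc
    push_neg at hc
    exact hmon fun q hq => hc q hq
  have he := h a ha
  have hfa : f a.1 < r := hfr _ (subset_closure (subset_convexHull ℝ _ ⟨a, ha, rfl⟩))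
  have hexp : (u + t • f - a.2) (z - a.1) = (u - a.2) (z - a.1) + t * (f z - f a.1) := by
    simp only [ContinuousLinearMap.sub_apply, ContinuousLinearMap.add_apply,
      ContinuousLinearMap.smul_apply, map_sub, smul_eq_mul]
    ring
  have h1 : t * (f z - f a.1) ≥ t * (f z - r) :=
    mul_le_mul_of_nonneg_left (by linarith) ht0.le
  have h2 : t * (f z - r) = |ε| + 1 := div_mul_cancel₀ _ hfz.ne'
  have h3 : -ε ≥ -(|ε|) := neg_le_neg (le_abs_self ε)
  rw [hexp] at hlt
  linarith

set_option maxHeartbeats 1600000 in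
lemma main_segment {A : Set (X × (X →L[ℝ] ℝ))} (hA : IsMaxMonotoneOp A)
    {c : X} {τ M : ℝ} (hτ : 0 < τ) (hball : Metric.ball c τ ⊆ opDom A)
    (hM : ∀ b ∈ A, b.1 ∈ Metric.ball c τ → ‖b.2‖ ≤ M)
    {z : X} (hz : z ∈ closure (convexHull ℝ (opDom A)))
    {s : ℝ} (hs0 : 0 < s) (hs1 : s ≤ 1) :
    s • c + (1 - s) • z ∈ opDom A := by
  classical
  set D := opDom A with hD
  set y := s • c + (1 - s) • z with hy
  have hcD : Metric.ball c τ ⊆ convexHull ℝ D := fun x hx => subset_convexHull ℝ D (hball hx)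
  have hcint : c ∈ interior (convexHull ℝ D) :=
    mem_interior.mpr ⟨Metric.ball c τ, hcD, Metric.isOpen_ball, Metric.mem_ball_self hτ⟩
  have hyint : y ∈ interior (convexHull ℝ D) :=
    (convex_convexHull ℝ D).combo_interior_closure_mem_interior hcint hz hs0 (by linarith)
      (by ring)
  obtain ⟨ρ, hρ0, hρ⟩ : ∃ ρ > 0, Metric.ball y ρ ⊆ convexHull ℝ D := by
    rcases mem_interior.mp hyint with ⟨U, hU, hUo, hyU⟩
    rcases Metric.isOpen_iff.mp hUo y hyU with ⟨ρ, hρ0, hρ⟩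
    exact ⟨ρ, hρ0, hρ.trans hU⟩
  set T : Set (X × ℝ) := (fun b : X × (X →L[ℝ] ℝ) => (b.1, b.2 (b.1 - y))) '' A with hT
  set G : Set (X × ℝ) := convexHull ℝ T with hG
  have hGconv : Convex ℝ G := convex_convexHull ℝ T
  have hTG : T ⊆ G := subset_convexHull ℝ T
  -- surjectivity of the first projection onto convexHull D
  have hG2 : ∀ x ∈ convexHull ℝ D, ∃ r : ℝ, (x, r) ∈ G := by
    have hfstT : (LinearMap.fst ℝ X ℝ) '' T = D := by
      ext x
      constructor
      · rintro ⟨q, ⟨b, hb, rfl⟩, rfl⟩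
        exact ⟨b, hb, rfl⟩
      · rintro ⟨b, hb, rfl⟩
        exact ⟨_, ⟨b, hb, rfl⟩, rfl⟩
    intro x hx
    have himg : x ∈ (LinearMap.fst ℝ X ℝ) '' G := by
      rw [hG, (LinearMap.fst ℝ X ℝ).image_convexHull, hfstT]
      exact hx
    obtain ⟨q, hqG, hq1⟩ := himg
    exact ⟨q.2, by rwa [show ((x, q.2) : X × ℝ) = q from Prod.ext hq1.symm rfl]⟩
  -- the quadratic inequality: points of G above y have nonneg second coordinate
  have hG3 : ∀ r : ℝ, ((y, r) : X × ℝ) ∈ G → 0 ≤ r := by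
    intro r hr
    rw [hG, convexHull_eq] at hr
    obtain ⟨ι, t, w, zf, hw0, hw1, hzT, hcm⟩ := hr
    rw [Finset.centerMass_eq_of_sum_1 _ _ hw1] at hcm
    have hsel : ∀ i : ι, ∃ q : X × (X →L[ℝ] ℝ),
        i ∈ t → q ∈ A ∧ (q.1, q.2 (q.1 - y)) = zf i := by
      intro i
      by_cases hi : i ∈ t
      · obtain ⟨b, hbA, hbe⟩ := hzT i hi
        exact ⟨b, fun _ => ⟨hbA, hbe⟩⟩
      · exact ⟨(0, 0), fun h => absurd h hi⟩
    choose q hq using hsel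
    set b : ι → X := fun i => (q i).1 with hbdef
    set B : ι → (X →L[ℝ] ℝ) := fun i => (q i).2 with hBdef
    have hcm1 : ∑ i ∈ t, w i • b i = y := by
      have h := congrArg Prod.fst hcm
      rw [Prod.fst_sum] at h
      simp only [Prod.smul_fst] at h
      rw [← h]
      refine Finset.sum_congr rfl fun i hi => ?_
      rw [← (hq i hi).2]
    have hcm2 : ∑ i ∈ t, w i * (B i) (b i - y) = r := by
      have h := congrArg Prod.snd hcm
      rw [Prod.snd_sum] at h
      simp only [Prod.smul_snd, smul_eq_mul] at h
      rw [← h]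
      refine Finset.sum_congr rfl fun i hi => ?_
      rw [← (hq i hi).2]
    have hmono : ∀ i ∈ t, ∀ j ∈ t, 0 ≤ (B i - B j) (b i - b j) := fun i hi j hj =>
      hA.1 (q i) (hq i hi).1 (q j) (hq j hj).1
    have hBy : ∀ i : ι, (B i) y = ∑ j ∈ t, w j * (B i) (b j) := by
      intro i
      rw [← hcm1, map_sum]
      exact Finset.sum_congr rfl fun j hj => by rw [map_smul, smul_eq_mul]
    set S1 : ℝ := ∑ i ∈ t, w i * (B i) (b i) with hS1
    set S2 : ℝ := ∑ i ∈ t, ∑ j ∈ t, w i * w j * (B i) (b j) with hS2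
    have hrS : r = S1 - S2 := by
      rw [← hcm2, hS1, hS2, ← Finset.sum_sub_distrib]
      refine Finset.sum_congr rfl fun i hi => ?_
      rw [map_sub, hBy i, mul_sub, Finset.mul_sum]
      congr 1
      exact Finset.sum_congr rfl fun j hj => by ring
    have hQexp : ∑ i ∈ t, ∑ j ∈ t, w i * w j * ((B i - B j) (b i - b j))
        = 2 * S1 - 2 * S2 := by
      have hexp : ∀ i j : ι, w i * w j * ((B i - B j) (b i - b j))
          = w i * w j * (B i) (b i) - w i * w j * (B i) (b j)
            - w i * w j * (B j) (b i) + w i * w j * (B j) (b j) := by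
        intro i j
        simp only [ContinuousLinearMap.sub_apply, map_sub]
        ring
      have hsplit : ∑ i ∈ t, ∑ j ∈ t, w i * w j * ((B i - B j) (b i - b j))
          = (∑ i ∈ t, ∑ j ∈ t, w i * w j * (B i) (b i))
            - (∑ i ∈ t, ∑ j ∈ t, w i * w j * (B i) (b j))
            - (∑ i ∈ t, ∑ j ∈ t, w i * w j * (B j) (b i))
            + (∑ i ∈ t, ∑ j ∈ t, w i * w j * (B j) (b j)) := by
        simp only [hexp, Finset.sum_add_distrib, Finset.sum_sub_distrib]
      have hA1 : ∑ i ∈ t, ∑ j ∈ t, w i * w j * (B i) (b i) = S1 := by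
        refine Finset.sum_congr rfl fun i hi => ?_
        rw [show ∀ f : ι → ℝ, (∑ j ∈ t, w i * w j * (B i) (b i)) =
          (w i * (B i) (b i)) * ∑ j ∈ t, w j from fun f => by
            rw [Finset.mul_sum]; exact Finset.sum_congr rfl fun j _ => by ring]
        · rw [hw1, mul_one]
        · exact fun j => 0
      have hA4 : ∑ i ∈ t, ∑ j ∈ t, w i * w j * (B j) (b j) = S1 := by
        rw [Finset.sum_comm]
        refine Finset.sum_congr rfl fun j hj => ?_
        rw [show (∑ i ∈ t, w i * w j * (B j) (b j)) =
          (w j * (B j) (b j)) * ∑ i ∈ t, w i from by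
            rw [Finset.mul_sum]; exact Finset.sum_congr rfl fun i _ => by ring]
        rw [hw1, mul_one]
      have hA3 : ∑ i ∈ t, ∑ j ∈ t, w i * w j * (B j) (b i) = S2 := by
        rw [Finset.sum_comm]
        rw [hS2]
        refine Finset.sum_congr rfl fun j hj => Finset.sum_congr rfl fun i hi => by ring
      rw [hsplit, hA1, hA3, hA4, hS2]
      ring
    have hQ : 0 ≤ ∑ i ∈ t, ∑ j ∈ t, w i * w j * ((B i - B j) (b i - b j)) :=
      Finset.sum_nonneg fun i hi => Finset.sum_nonneg fun j hj =>
        mul_nonneg (mul_nonneg (hw0 i hi) (hw0 j hj)) (hmono i hi j hj)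
    rw [hQexp] at hQ
    linarith [hrS]
  -- the sets defining the sublinear functional
  set PS : X → Set ℝ := fun v => {q : ℝ | ∃ t r : ℝ, 0 < t ∧ ((y + t • v, r) : X × ℝ) ∈ G ∧
    q = r / t} with hPS
  have hPSne : ∀ v : X, (PS v).Nonempty := by
    intro v
    have ht0 : 0 < ρ / (2 * (‖v‖ + 1)) := by positivity
    set t0 := ρ / (2 * (‖v‖ + 1)) with ht0def
    have hmem : y + t0 • v ∈ Metric.ball y ρ := by
      rw [Metric.mem_ball, dist_eq_norm]
      have h1 : ‖y + t0 • v - y‖ = t0 * ‖v‖ := by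
        rw [add_sub_cancel_left, norm_smul, Real.norm_eq_abs, abs_of_pos ht0]
      rw [h1, ht0def]
      rw [div_mul_eq_mul_div, div_lt_iff₀ (by positivity)]
      nlinarith [norm_nonneg v, hρ0]
    obtain ⟨r, hr⟩ := hG2 _ (hρ hmem)
    exact ⟨r / t0, t0, r, ht0, hr, rfl⟩
  have hlb : ∀ v : X, ∀ t₁ r₁ : ℝ, 0 < t₁ → ((y + t₁ • (-v), r₁) : X × ℝ) ∈ G →
      ∀ qq ∈ PS v, -(r₁ / t₁) ≤ qq := by
    rintro v t₁ r₁ ht₁ hr₁ qq ⟨t, r, ht, hrG, rfl⟩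
    have hsum : 0 < t + t₁ := by linarith
    have hcomb := hGconv hrG hr₁ (a := t₁ / (t + t₁)) (b := t / (t + t₁))
      (by positivity) (by positivity) (by field_simp; ring)
    have heq : (t₁ / (t + t₁)) • ((y + t • v, r) : X × ℝ)
        + (t / (t + t₁)) • ((y + t₁ • (-v), r₁) : X × ℝ)
        = ((y, (t₁ / (t + t₁)) * r + (t / (t + t₁)) * r₁) : X × ℝ) := by
      have hX : (t₁ / (t + t₁)) • (y + t • v) + (t / (t + t₁)) • (y + t₁ • (-v)) = y := by
        match_scalars <;> (field_simp; try ring)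
      refine Prod.ext ?_ rfl
      · exact hX
    rw [heq] at hcomb
    have h0 := hG3 _ hcomb
    have heq2 : t₁ / (t + t₁) * r + t / (t + t₁) * r₁ = (t₁ * r + t * r₁) / (t + t₁) := by
      field_simp
      try ring
    rw [heq2] at h0
    have h1 : 0 ≤ t₁ * r + t * r₁ := by
      rwa [le_div_iff₀ hsum, zero_mul] at h0
    have h2 : 0 ≤ r / t + r₁ / t₁ := by
      have heq3 : r / t + r₁ / t₁ = (t₁ * r + t * r₁) / (t * t₁) := by
        field_simp
      rw [heq3]
      exact div_nonneg h1 (mul_pos ht ht₁).le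
    linarith
  have hbdd : ∀ v : X, BddBelow (PS v) := by
    intro v
    obtain ⟨q₁, t₁, r₁, ht₁, hG₁, hq₁⟩ := hPSne (-v)
    exact ⟨-(r₁ / t₁), fun qq hqq => hlb v t₁ r₁ ht₁ hG₁ qq hqq⟩
  set p : X → ℝ := fun v => sInf (PS v) with hp
  have hp_le : ∀ (v : X) (t r : ℝ), 0 < t → ((y + t • v, r) : X × ℝ) ∈ G → p v ≤ r / t :=
    fun v t r ht hG' => csInf_le (hbdd v) ⟨t, r, ht, hG', rfl⟩
  have hp_add : ∀ v w : X, p (v + w) ≤ p v + p w := by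
    intro v w
    have H : ∀ q1 ∈ PS v, ∀ q2 ∈ PS w, p (v + w) ≤ q1 + q2 := by
      rintro _ ⟨t1, r1, ht1, h1, rfl⟩ _ ⟨t2, r2, ht2, h2, rfl⟩
      have hsum : 0 < t1 + t2 := by linarith
      have hcomb := hGconv h1 h2 (a := t2 / (t1 + t2)) (b := t1 / (t1 + t2))
        (by positivity) (by positivity) (by field_simp; ring)
      have heq : (t2 / (t1 + t2)) • ((y + t1 • v, r1) : X × ℝ)
          + (t1 / (t1 + t2)) • ((y + t2 • w, r2) : X × ℝ)
          = ((y + (t1 * t2 / (t1 + t2)) • (v + w),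
              (t2 / (t1 + t2)) * r1 + (t1 / (t1 + t2)) * r2) : X × ℝ) := by
        refine Prod.ext ?_ rfl
        show (t2 / (t1 + t2)) • (y + t1 • v) + (t1 / (t1 + t2)) • (y + t2 • w)
            = y + (t1 * t2 / (t1 + t2)) • (v + w)
        match_scalars <;> (field_simp; try ring)
      rw [heq] at hcomb
      have hle := hp_le (v + w) _ _ (by positivity) hcomb
      calc p (v + w) ≤ ((t2 / (t1 + t2)) * r1 + (t1 / (t1 + t2)) * r2)
            / (t1 * t2 / (t1 + t2)) := hle
        _ = r1 / t1 + r2 / t2 := by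
            field_simp
    have H2 : ∀ q2 ∈ PS w, p (v + w) - q2 ≤ p v := fun q2 hq2 =>
      le_csInf (hPSne v) fun q1 hq1 => by linarith [H q1 hq1 q2 hq2]
    have H3 : p (v + w) - p v ≤ p w :=
      le_csInf (hPSne w) fun q2 hq2 => by linarith [H2 q2 hq2]
    linarith
  have hp_smul : ∀ κ : ℝ, 0 < κ → ∀ v : X, p (κ • v) = κ * p v := by
    intro κ hκ v
    have hsub : ∀ q ∈ PS v, κ * q ∈ PS (κ • v) := by
      rintro _ ⟨t, r, ht, hG', rfl⟩
      refine ⟨t / κ, r, by positivity, ?_, by field_simp; try ring⟩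
      rw [smul_smul, div_mul_cancel₀ _ hκ.ne']
      exact hG'
    have hsub2 : ∀ q ∈ PS (κ • v), q / κ ∈ PS v := by
      rintro _ ⟨t, r, ht, hG', rfl⟩
      refine ⟨t * κ, r, by positivity, ?_, by field_simp; try ring⟩
      rw [mul_smul]
      exact hG'
    apply le_antisymm
    · have h2 : p (κ • v) / κ ≤ p v := by
        refine le_csInf (hPSne v) fun q hq => ?_
        have := csInf_le (hbdd (κ • v)) (hsub q hq)
        rw [div_le_iff₀ hκ]
        linarith [this, mul_comm q κ]
      have := (div_le_iff₀ hκ).mp h2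
      linarith [mul_comm (p v) κ]
    · have h2 : ∀ q ∈ PS (κ • v), p v ≤ q / κ := fun q hq =>
        csInf_le (hbdd v) (hsub2 q hq)
      have h3 : p v * κ ≤ p (κ • v) := by
        refine le_csInf (hPSne (κ • v)) fun q hq => ?_
        have := h2 q hq
        rw [le_div_iff₀ hκ] at this
        linarith
      linarith [mul_comm (p v) κ]
  have hp0 : p 0 = 0 := by
    have h2 := hp_smul 2 (by norm_num) 0
    rw [smul_zero] at h2
    linarith
  -- quantitative bound on p
  have hM0 : 0 ≤ M := by
    obtain ⟨cw, hcwA, hcw1⟩ : ∃ q ∈ A, q.1 = c := hball (Metric.mem_ball_self hτ)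
    exact le_trans (norm_nonneg _) (hM cw hcwA (by rw [hcw1]; exact Metric.mem_ball_self hτ))
  set g₀ : X := c - y with hg₀
  have hG4 : ∀ x ∈ Metric.ball c τ, ∃ r : ℝ, ((x, r) : X × ℝ) ∈ G ∧ |r| ≤ M * ‖x - y‖ := by
    intro x hx
    obtain ⟨q, hqA, hq1⟩ := hball hx
    refine ⟨q.2 (q.1 - y), hTG ⟨q, hqA, Prod.ext hq1 rfl⟩, ?_⟩
    calc |q.2 (q.1 - y)| ≤ ‖q.2‖ * ‖q.1 - y‖ := q.2.le_opNorm _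
      _ ≤ M * ‖x - y‖ := by
          rw [hq1]
          exact mul_le_mul_of_nonneg_right (hM q hqA (by rw [hq1]; exact hx)) (norm_nonneg _)
  set Cg : ℝ := M * (‖g₀‖ + τ) + max (p (-g₀)) 0 + 1 with hCg
  have hCg0 : 0 < Cg := by positivity
  set K : ℝ := 2 * Cg / τ with hK
  have hK0 : 0 < K := by positivity
  have hpK : ∀ v : X, p v ≤ K * ‖v‖ := by
    intro v
    rcases eq_or_ne v 0 with rfl | hv
    · simp [hp0]
    · have hnv : 0 < ‖v‖ := norm_pos_iff.mpr hv
      set lam : ℝ := 2 * ‖v‖ / τ with hlam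
      have hlam0 : 0 < lam := by positivity
      have hxball : c + lam⁻¹ • v ∈ Metric.ball c τ := by
        rw [Metric.mem_ball, dist_eq_norm, add_sub_cancel_left, norm_smul, Real.norm_eq_abs,
          abs_of_pos (inv_pos.mpr hlam0), hlam]
        rw [inv_div, div_mul_eq_mul_div, div_lt_iff₀ (by positivity)]
        nlinarith [hnv, hτ, norm_nonneg v]
      obtain ⟨r, hrG, hrle⟩ := hG4 _ hxball
      have hpt : y + lam⁻¹ • (v + lam • g₀) = c + lam⁻¹ • v := by
        rw [hg₀, smul_add, smul_smul, inv_mul_cancel₀ hlam0.ne', one_smul]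
        abel
      have h1 : p (v + lam • g₀) ≤ r / lam⁻¹ :=
        hp_le _ _ _ (inv_pos.mpr hlam0) (by rw [hpt]; exact hrG)
      have h2 : p (-(lam • g₀)) = lam * p (-g₀) := by
        rw [← smul_neg]
        exact hp_smul lam hlam0 _
      have h3 : p v ≤ p (v + lam • g₀) + p (-(lam • g₀)) := by
        have := hp_add (v + lam • g₀) (-(lam • g₀))
        rw [add_neg_cancel_right] at this
        exact this
      have hrb : r ≤ M * (‖g₀‖ + τ) := by
        have hb1 : ‖c + lam⁻¹ • v - y‖ ≤ ‖g₀‖ + τ := by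
          have : c + lam⁻¹ • v - y = g₀ + lam⁻¹ • v := by rw [hg₀]; abel
          rw [this]
          refine (norm_add_le _ _).trans ?_
          have : ‖lam⁻¹ • v‖ = τ / 2 := by
            rw [norm_smul, Real.norm_eq_abs, abs_of_pos (inv_pos.mpr hlam0), hlam, inv_div]
            field_simp
            try ring
          rw [this]
          linarith
        calc r ≤ |r| := le_abs_self _
          _ ≤ M * ‖c + lam⁻¹ • v - y‖ := hrle
          _ ≤ M * (‖g₀‖ + τ) := mul_le_mul_of_nonneg_left hb1 hM0
      have h4 : r / lam⁻¹ = lam * r := by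
        rw [div_eq_mul_inv, inv_inv, mul_comm]
      have h5 : p v ≤ lam * r + lam * p (-g₀) := by
        rw [h4] at h1
        linarith [h1, h2, h3]
      have h6 : lam * r + lam * p (-g₀) ≤ lam * Cg := by
        have : r + p (-g₀) ≤ Cg := by
          rw [hCg]
          have := le_max_left (p (-g₀)) 0
          linarith
        nlinarith
      have h7 : lam * Cg = K * ‖v‖ := by
        rw [hlam, hK]
        field_simp
      linarith
  -- Hahn–Banach
  obtain ⟨g, -, hg⟩ := exists_extension_of_le_sublinear ⟨⊥, 0⟩ p
    (fun κ hκ v => hp_smul κ hκ v) hp_add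
    (fun x => by
      have hx0 : (x : X) = 0 := (Submodule.mem_bot ℝ).mp x.2
      simp [hx0, hp0])
  have hgb : ∀ v : X, ‖g v‖ ≤ K * ‖v‖ := by
    intro v
    rw [Real.norm_eq_abs, abs_le]
    constructor
    · have h1 := hg (-v)
      rw [map_neg] at h1
      have h2 := hpK (-v)
      rw [norm_neg] at h2
      linarith
    · linarith [hg v, hpK v]
  set w' : X →L[ℝ] ℝ := LinearMap.mkContinuous g K hgb with hw'
  have hrel : MonRel (y, w') A := by
    intro q hq
    have hgen : ((q.1, q.2 (q.1 - y)) : X × ℝ) ∈ G := hTG ⟨q, hq, rfl⟩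
    have h1 : p (q.1 - y) ≤ q.2 (q.1 - y) / 1 := by
      refine hp_le _ 1 _ one_pos ?_
      rw [one_smul, add_sub_cancel]
      exact hgen
    rw [div_one] at h1
    have h2 : g (q.1 - y) ≤ q.2 (q.1 - y) := (hg _).trans h1
    show 0 ≤ ((y, w').2 - q.2) ((y, w').1 - q.1)
    have h3 : ((y, w').2 - q.2) ((y, w').1 - q.1) = q.2 (q.1 - y) - g (q.1 - y) := by
      show (w' - q.2) (y - q.1) = q.2 (q.1 - y) - g (q.1 - y)
      rw [ContinuousLinearMap.sub_apply]
      have hw'app : w' (y - q.1) = g (y - q.1) := rfl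
      rw [hw'app]
      have : g (y - q.1) = -g (q.1 - y) := by
        rw [← map_neg, neg_sub]
      rw [this]
      have : q.2 (y - q.1) = -q.2 (q.1 - y) := by
        rw [← map_neg, neg_sub]
      rw [this]
      ring
    rw [h3]
    linarith
  exact ⟨(y, w'), hA.2 _ hrel, rfl⟩

lemma exists_bounded_ball [CompleteSpace X] {A : Set (X × (X →L[ℝ] ℝ))} (hA : IsMonotoneOp A)
    (hint : (interior (opDom A)).Nonempty) :
    ∃ (c : X) (τ M : ℝ), 0 < τ ∧ Metric.ball c τ ⊆ opDom A ∧
      ∀ b ∈ A, b.1 ∈ Metric.ball c τ → ‖b.2‖ ≤ M := by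
  classical
  obtain ⟨c0, hc0⟩ := hint
  obtain ⟨δ, hδ0, hδ⟩ : ∃ δ > 0, Metric.ball c0 δ ⊆ opDom A := by
    rcases mem_interior.mp hc0 with ⟨U, hU, hUo, hcU⟩
    rcases Metric.isOpen_iff.mp hUo c0 hcU with ⟨δ, hδ0, hδ⟩
    exact ⟨δ, hδ0, hδ.trans hU⟩
  set Q : Set X := Metric.closedBall c0 (δ / 2) with hQ
  have hQD : Q ⊆ opDom A := by
    intro x hx
    exact hδ (Metric.mem_ball.mpr (lt_of_le_of_lt (Metric.mem_closedBall.mp hx) (by linarith)))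
  set Cn : ℕ → Set X := fun n =>
    Q ∩ ⋂ (b : X × (X →L[ℝ] ℝ)) (_ : b ∈ A) (_ : b.1 ∈ Q), {x | b.2 (x - b.1) ≤ (n : ℝ)} with hCn
  have hCc : ∀ n, IsClosed (Cn n) := by
    intro n
    refine Metric.isClosed_closedBall.inter ?_
    refine isClosed_iInter fun b => isClosed_iInter fun _ => isClosed_iInter fun _ => ?_
    exact isClosed_le (b.2.continuous.comp (continuous_id.sub continuous_const)) continuous_const
  have hCcover : ∀ x ∈ Q, ∃ n, x ∈ Cn n := by
    intro x hx
    obtain ⟨q, hqA, hq1⟩ := hQD hx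
    refine ⟨⌈‖q.2‖ * δ⌉₊, hx, ?_⟩
    simp only [Set.mem_iInter, Set.mem_setOf_eq]
    intro b hb hbQ
    have hmono := hA q hqA b hb
    have hd : ‖x - b.1‖ ≤ δ := by
      have h1 : dist x c0 ≤ δ / 2 := Metric.mem_closedBall.mp hx
      have h2 : dist b.1 c0 ≤ δ / 2 := Metric.mem_closedBall.mp hbQ
      calc ‖x - b.1‖ = dist x b.1 := (dist_eq_norm _ _).symm
        _ ≤ dist x c0 + dist c0 b.1 := dist_triangle _ _ _
        _ ≤ δ / 2 + δ / 2 := by rw [dist_comm c0 b.1]; linarith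
        _ = δ := by ring
    have hstep : b.2 (x - b.1) ≤ q.2 (x - b.1) := by
      have : 0 ≤ (q.2 - b.2) (q.1 - b.1) := hmono
      rw [hq1] at this
      rw [ContinuousLinearMap.sub_apply] at this
      linarith
    have hq2 : q.2 (x - b.1) ≤ ‖q.2‖ * δ := by
      calc q.2 (x - b.1) ≤ ‖q.2 (x - b.1)‖ := le_abs_self _
        _ ≤ ‖q.2‖ * ‖x - b.1‖ := q.2.le_opNorm _
        _ ≤ ‖q.2‖ * δ := mul_le_mul_of_nonneg_left hd (norm_nonneg _)
    exact hstep.trans (hq2.trans (Nat.le_ceil _))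
  haveI : Nonempty Q := ⟨⟨c0, Metric.mem_closedBall_self (by linarith)⟩⟩
  haveI : CompleteSpace Q := Metric.isClosed_closedBall.completeSpace_coe
  obtain ⟨n, x1s, hx1⟩ : ∃ n, ∃ x1s : Q, x1s ∈ interior (Subtype.val ⁻¹' Cn n) := by
    obtain ⟨n, hn⟩ := nonempty_interior_of_iUnion_of_closed
      (f := fun n : ℕ => (Subtype.val ⁻¹' Cn n : Set Q))
      (fun n => (hCc n).preimage continuous_subtype_val)
      (by
        ext x
        simp only [Set.mem_iUnion, Set.mem_preimage, Set.mem_univ, iff_true]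
        exact hCcover x.1 x.2)
    exact ⟨n, hn⟩
  obtain ⟨ε, hε0, hεball⟩ : ∃ ε > 0, ∀ x₂ : Q, dist x₂ x1s < ε → (x₂ : X) ∈ Cn n := by
    rcases Metric.mem_nhds_iff.mp (mem_interior_iff_mem_nhds.mp hx1) with ⟨ε, hε0, hb⟩
    exact ⟨ε, hε0, fun x₂ h => hb (Metric.mem_ball.mpr h)⟩
  set x1 : X := (x1s : X) with hx1def
  have hx1Q : x1 ∈ Q := x1s.2
  set μ : ℝ := min (1 / 2) (ε / (2 * δ + 2)) with hμ
  have hμ0 : 0 < μ := lt_min (by norm_num) (by positivity)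
  have hμ1 : μ ≤ 1 / 2 := min_le_left _ _
  have hμε : μ * δ ≤ ε / 2 := by
    have h1 : μ ≤ ε / (2 * δ + 2) := min_le_right _ _
    have h2 : μ * δ ≤ (ε / (2 * δ + 2)) * δ := mul_le_mul_of_nonneg_right h1 hδ0.le
    have h3 : (ε / (2 * δ + 2)) * δ ≤ ε / 2 := by
      rw [div_mul_eq_mul_div, div_le_div_iff₀ (by positivity) (by norm_num)]
      nlinarith
    linarith
  set c1 : X := x1 + μ • (c0 - x1) with hc1
  set ρ : ℝ := μ * δ / 2 with hρ
  have hρ0 : 0 < ρ := by positivity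
  have hx1c0 : ‖x1 - c0‖ ≤ δ / 2 := by
    have := Metric.mem_closedBall.mp hx1Q
    rwa [dist_eq_norm] at this
  have hball1 : Metric.ball c1 ρ ⊆ Cn n := by
    intro x hx
    rw [Metric.mem_ball, dist_eq_norm] at hx
    have hc1c0 : c1 - c0 = (1 - μ) • (x1 - c0) := by
      rw [hc1]; module
    have hc1x1 : c1 - x1 = μ • (c0 - x1) := by rw [hc1]; module
    have hxQ : x ∈ Q := by
      rw [hQ, Metric.mem_closedBall, dist_eq_norm]
      have h1 : ‖x - c0‖ ≤ ‖x - c1‖ + ‖c1 - c0‖ := by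
        calc ‖x - c0‖ = ‖(x - c1) + (c1 - c0)‖ := by rw [sub_add_sub_cancel]
          _ ≤ ‖x - c1‖ + ‖c1 - c0‖ := norm_add_le _ _
      have h2 : ‖c1 - c0‖ ≤ (1 - μ) * (δ / 2) := by
        rw [hc1c0, norm_smul, Real.norm_eq_abs, abs_of_nonneg (by linarith)]
        exact mul_le_mul_of_nonneg_left hx1c0 (by linarith)
      nlinarith [hx]
    have hdist : dist (⟨x, hxQ⟩ : Q) x1s < ε := by
      have : dist (⟨x, hxQ⟩ : Q) x1s = ‖x - x1‖ := by
        rw [Subtype.dist_eq, dist_eq_norm]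
      rw [this]
      have h1 : ‖x - x1‖ ≤ ‖x - c1‖ + ‖c1 - x1‖ := by
        calc ‖x - x1‖ = ‖(x - c1) + (c1 - x1)‖ := by rw [sub_add_sub_cancel]
          _ ≤ ‖x - c1‖ + ‖c1 - x1‖ := norm_add_le _ _
      have h2 : ‖c1 - x1‖ ≤ μ * (δ / 2) := by
        rw [hc1x1, norm_smul, Real.norm_eq_abs, abs_of_nonneg hμ0.le]
        have : ‖c0 - x1‖ = ‖x1 - c0‖ := norm_sub_rev _ _
        rw [this]
        exact mul_le_mul_of_nonneg_left hx1c0 hμ0.le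
      have : ‖x - x1‖ < ρ + μ * (δ / 2) := by linarith [hx]
      have hρμ : ρ + μ * (δ / 2) = μ * δ := by rw [hρ]; ring
      linarith
    exact hεball _ hdist
  have hCnQ : Cn n ⊆ Q := fun x hx => hx.1
  refine ⟨c1, ρ / 2, 4 * n / ρ, by positivity, ?_, ?_⟩
  · exact (Metric.ball_subset_ball (by linarith)).trans (hball1.trans (hCnQ.trans hQD))
  · intro b hb hbball
    have hbCn : b.1 ∈ Cn n := hball1 (Metric.ball_subset_ball (by linarith) hbball)
    have hbQ : b.1 ∈ Q := hbCn.1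
    have hbc1 : ‖b.1 - c1‖ < ρ / 2 := by
      have := Metric.mem_ball.mp hbball; rwa [dist_eq_norm] at this
    have htest : ∀ v : X, ‖v‖ < ρ / 2 → b.2 v ≤ (n : ℝ) := by
      intro v hv
      have hmem : b.1 + v ∈ Metric.ball c1 ρ := by
        rw [Metric.mem_ball, dist_eq_norm]
        calc ‖b.1 + v - c1‖ = ‖(b.1 - c1) + v‖ := by abel_nf
          _ ≤ ‖b.1 - c1‖ + ‖v‖ := norm_add_le _ _
          _ < ρ := by linarith
      have hCnmem := hball1 hmem
      have h2 := hCnmem.2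
      simp only [Set.mem_iInter, Set.mem_setOf_eq] at h2
      have := h2 b hb hbQ
      simpa using this
    apply ContinuousLinearMap.opNorm_le_bound _ (by positivity)
    intro x
    rcases eq_or_ne x 0 with rfl | hx0
    · simp
    · have hnx : 0 < ‖x‖ := norm_pos_iff.mpr hx0
      set t : ℝ := ρ / (4 * ‖x‖) with htdef
      have ht0 : 0 < t := by positivity
      have htx : ‖t • x‖ < ρ / 2 := by
        rw [norm_smul, Real.norm_eq_abs, abs_of_pos ht0, htdef]
        rw [div_mul_eq_mul_div, div_lt_iff₀ (by positivity)]
        nlinarith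
      have h1 := htest (t • x) htx
      have h2 := htest (-(t • x)) (by rwa [norm_neg])
      rw [map_neg] at h2
      have habs : |b.2 (t • x)| ≤ (n : ℝ) := abs_le.mpr ⟨by linarith, h1⟩
      rw [map_smul, smul_eq_mul, abs_mul, abs_of_pos ht0] at habs
      have hb2 : |b.2 x| ≤ (n : ℝ) / t := by
        rw [le_div_iff₀ ht0]
        linarith [habs, mul_comm t (|b.2 x|)]
      have : (n : ℝ) / t = 4 * n / ρ * ‖x‖ := by
        rw [htdef]
        field_simp
      rw [Real.norm_eq_abs]
      linarith [hb2, this ▸ hb2]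

end Aux

/-- Corollary: if `A` is maximally monotone with `int(dom A) ≠ ∅`, then
`cl(dom A) = cl(conv(dom A)) = cl(P_X[dom F_A])`; in particular `dom A` is nearly
convex. -/
theorem nearly_convex_of_interior_nonempty
    [NormedAddCommGroup X] [NormedSpace ℝ X] [CompleteSpace X]
    (A : Set (X × (X →L[ℝ] ℝ))) (hA : IsMaxMonotoneOp A)
    (hint : (interior (opDom A)).Nonempty) :
    closure (opDom A) = closure (convexHull ℝ (opDom A)) ∧
    closure (opDom A) = closure (Prod.fst '' fitzDom A) ∧
    Convex ℝ (closure (opDom A)) := by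
  obtain ⟨c, τ, M, hτ, hball, hM⟩ := exists_bounded_ball hA.1 hint
  -- every point of the closed convex hull of the domain is in the closure of the domain
  have hcl : closure (convexHull ℝ (opDom A)) ⊆ closure (opDom A) := by
    intro z hz
    have hmem : ∀ n : ℕ, ((n : ℝ) + 2)⁻¹ • c + (1 - ((n : ℝ) + 2)⁻¹) • z ∈ opDom A := by
      intro n
      refine main_segment hA hτ hball hM hz ?_ ?_
      · positivity
      · rw [inv_le_one_iff₀]
        right
        have : (0 : ℝ) ≤ (n : ℝ) := Nat.cast_nonneg n
        linarith
    have htend : Filter.Tendsto (fun n : ℕ => ((n : ℝ) + 2)⁻¹ • c + (1 - ((n : ℝ) + 2)⁻¹) • z)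
        Filter.atTop (nhds z) := by
      have h1 : Filter.Tendsto (fun n : ℕ => ((n : ℝ) + 2)⁻¹) Filter.atTop (nhds 0) := by
        apply Filter.Tendsto.comp tendsto_inv_atTop_zero
        apply Filter.tendsto_atTop_add_const_right
        exact tendsto_natCast_atTop_atTop
      have h2 : Filter.Tendsto (fun n : ℕ => ((n : ℝ) + 2)⁻¹ • c + (1 - ((n : ℝ) + 2)⁻¹) • z)
          Filter.atTop (nhds ((0 : ℝ) • c + ((1 : ℝ) - 0) • z)) := by
        exact (h1.smul_const c).add ((tendsto_const_nhds.sub h1).smul_const z)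
      simpa using h2
    exact mem_closure_of_tendsto htend (Filter.Eventually.of_forall hmem)
  have hDF : opDom A ⊆ Prod.fst '' fitzDom A := by
    rintro x ⟨a, ha, rfl⟩
    exact ⟨a, fitz_lt_top_of_erel (erel_self hA.1 ha), rfl⟩
  have hPF : Prod.fst '' fitzDom A ⊆ closure (opDom A) := by
    rintro x ⟨q, hq, rfl⟩
    obtain ⟨ε, he⟩ := erel_of_fitz_lt_top hq
    exact hcl (mem_closure_convexHull_of_erel hA he)
  have e1 : closure (opDom A) = closure (convexHull ℝ (opDom A)) :=
    le_antisymm (closure_mono (subset_convexHull ℝ _))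
      (closure_minimal ((subset_closure).trans hcl) isClosed_closure)
  have e2 : closure (opDom A) = closure (Prod.fst '' fitzDom A) :=
    le_antisymm (closure_mono hDF) (closure_minimal hPF isClosed_closure)
  refine ⟨e1, e2, ?_⟩
  rw [e1]
  exact (convex_convexHull ℝ _).closure
end
end

section
/- Let X be a real Banach space and A : X ⇉ X* a maximally monotone operator whose graph is an affine subset of X × X* (in particular, a maximally monotone linear relation). Then cl(dom A) = cl(conv(dom A)) = cl(P_X[dom F_A]); in particular dom A is nearly convex (its closure is convex). -/
open Set

noncomputable section

variable {X : Type*}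

/-- Corollary: if `A` is maximally monotone with affine graph, then
`cl(dom A) = cl(conv(dom A)) = cl(P_X[dom F_A])`; in particular `dom A` is nearly
convex. -/
theorem nearly_convex_of_affine_graph
    [NormedAddCommGroup X] [NormedSpace ℝ X] [CompleteSpace X]
    (A : Set (X × (X →L[ℝ] ℝ))) (hA : IsMaxMonotoneOp A)
    (haff : ∀ q ∈ A, ∀ r ∈ A, ∀ t : ℝ, t • q + (1 - t) • r ∈ A) :
    closure (opDom A) = closure (convexHull ℝ (opDom A)) ∧
    closure (opDom A) = closure (Prod.fst '' fitzDom A) ∧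
    Convex ℝ (closure (opDom A)) := by
  -- A is nonempty by maximality
  have hAne : A.Nonempty := by
    rcases Set.eq_empty_or_nonempty A with h | h
    · refine ⟨(0, 0), hA.2 (0, 0) ?_⟩
      intro q hq; rw [h] at hq; exact absurd hq (Set.notMem_empty q)
    · exact h
  -- opDom A is convex
  have hconv : Convex ℝ (opDom A) := by
    rintro x ⟨q, hq, rfl⟩ y ⟨r, hr, rfl⟩ a b _ _ hab
    refine ⟨a • q + (1 - a) • r, haff q hq r hr a, ?_⟩
    have hb : b = 1 - a := by linarith
    simp [Prod.fst_add, Prod.smul_fst, hb]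
  -- A ⊆ fitzDom A, hence opDom A ⊆ fst '' fitzDom A
  have hsub1 : opDom A ⊆ Prod.fst '' fitzDom A := by
    rintro x ⟨p, hp, rfl⟩
    refine ⟨p, ?_, rfl⟩
    have hle : fitz A p.1 p.2 ≤ ((p.2 p.1 : ℝ) : EReal) := by
      refine iSup₂_le fun a ha => ?_
      rw [EReal.coe_le_coe_iff]
      have h0 := hA.1 p hp a ha
      simp only [ContinuousLinearMap.sub_apply, map_sub] at h0
      linarith
    exact lt_of_le_of_lt hle (EReal.coe_lt_top _)
  -- fst '' fitzDom A ⊆ closure (opDom A)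
  have hsub2 : Prod.fst '' fitzDom A ⊆ closure (opDom A) := by
    rintro x ⟨q, hq, rfl⟩
    by_contra hx
    obtain ⟨f, u, hfu, hux⟩ :=
      geometric_hahn_banach_closed_point (hconv.closure) isClosed_closure hx
    obtain ⟨p0, hp0⟩ := hAne
    -- f is constant on opDom A
    have hconst : ∀ a ∈ A, f a.1 = f p0.1 := by
      intro a ha
      by_contra hne
      have hline : ∀ t : ℝ, t * (f a.1 - f p0.1) + f p0.1 < u := by
        intro t
        have hm : (t • a + (1 - t) • p0 : X × (X →L[ℝ] ℝ)) ∈ A := haff a ha p0 hp0 t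
        have hmem : t • a.1 + (1 - t) • p0.1 ∈ opDom A := ⟨_, hm, rfl⟩
        have := hfu _ (subset_closure hmem)
        simp only [map_add, map_smul, smul_eq_mul] at this
        linarith [this]
      have hd : f a.1 - f p0.1 ≠ 0 := fun h => hne (by linarith [sub_eq_zero.mp h])
      have := hline ((u - f p0.1) / (f a.1 - f p0.1))
      rw [div_mul_cancel₀ _ hd] at this
      linarith
    -- (p0.1, p0.2 + s • f) ∈ A for all s
    have hmemA : ∀ s : ℝ, (p0.1, p0.2 + s • f) ∈ A := by
      intro s
      refine hA.2 _ fun a ha => ?_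
      have h0 := hA.1 p0 hp0 a ha
      have hf : f (p0.1 - a.1) = 0 := by
        rw [map_sub, hconst a ha, sub_self]
      simp only [ContinuousLinearMap.sub_apply, ContinuousLinearMap.add_apply,
        ContinuousLinearMap.smul_apply, smul_eq_mul] at h0 ⊢
      rw [hf]
      linarith
    -- the Fitzpatrick terms are unbounded
    set C : ℝ := q.2 p0.1 + p0.2 q.1 - p0.2 p0.1 with hC
    have hd : 0 < f q.1 - f p0.1 := by
      have h1 := hfu p0.1 (subset_closure ⟨p0, hp0, rfl⟩)
      linarith
    have hterm : ∀ s : ℝ, ((C + s * (f q.1 - f p0.1) : ℝ) : EReal) ≤ fitz A q.1 q.2 := by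
      intro s
      have := le_iSup₂ (f := fun (a : X × (X →L[ℝ] ℝ)) (_ : a ∈ A) =>
        ((q.2 a.1 + a.2 q.1 - a.2 a.1 : ℝ) : EReal)) _ (hmemA s)
      refine le_trans (le_of_eq ?_) this
      congr 1
      simp only [ContinuousLinearMap.add_apply, ContinuousLinearMap.smul_apply, smul_eq_mul, hC]
      ring
    have hne_top : fitz A q.1 q.2 ≠ ⊤ := hq.ne
    have hne_bot : fitz A q.1 q.2 ≠ ⊥ :=
      fun h => by simpa [h] using hterm 0
    set M : ℝ := (fitz A q.1 q.2).toReal with hM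
    have hMeq : ((M : ℝ) : EReal) = fitz A q.1 q.2 := EReal.coe_toReal hne_top hne_bot
    have hreal : ∀ s : ℝ, C + s * (f q.1 - f p0.1) ≤ M := by
      intro s
      have := hterm s
      rw [← hMeq, EReal.coe_le_coe_iff] at this
      exact this
    have := hreal ((M - C + 1) / (f q.1 - f p0.1))
    rw [div_mul_cancel₀ _ (ne_of_gt hd)] at this
    linarith
  have h1 : closure (opDom A) = closure (Prod.fst '' fitzDom A) :=
    le_antisymm (closure_mono hsub1)
      (by rw [← closure_closure (s := opDom A)]; exact closure_mono hsub2)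
  exact ⟨by rw [hconv.convexHull_eq], h1, hconv.closure⟩
end
end

section
/- Let X be a real Banach space and A : X ⇉ X* a maximally monotone operator of type (BR). Then cl(dom A) = cl(P_X[dom F_A]) and cl(ran A) = cl(P_{X*}[dom F_A]); consequently both dom A and ran A are nearly convex (their closures are convex). -/
open Set

noncomputable section

variable {X : Type*}

/-- `A` is of type (BR): whenever `α, β > 0` and
`inf_{(a,a*) ∈ gra A} ⟨x − a, x* − a*⟩ > −αβ`, there exists `(b, b*) ∈ gra A` with
`‖x − b‖ < α` and `‖x* − b*‖ < β`. -/
def IsBRtype [NormedAddCommGroup X] [NormedSpace ℝ X]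
    (A : Set (X × (X →L[ℝ] ℝ))) : Prop :=
  ∀ (x : X) (x' : X →L[ℝ] ℝ) (α β : ℝ), 0 < α → 0 < β →
    (∃ c : ℝ, -(α * β) < c ∧ ∀ a ∈ A, c ≤ (x' - a.2) (x - a.1)) →
    ∃ b ∈ A, ‖x - b.1‖ < α ∧ ‖x' - b.2‖ < β



/-- Any `EReal` below `⊤` is bounded above by some real number. -/
lemma ereal_exists_real_ge {x : EReal} (h : x < ⊤) : ∃ M : ℝ, x ≤ (M : EReal) := by
  induction x with
  | bot => exact ⟨0, bot_le⟩
  | coe r => exact ⟨r, le_rfl⟩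
  | top => exact absurd h (lt_irrefl _)

/-- Membership in `fitzDom` is equivalent to a real upper bound on the defining family. -/
lemma mem_fitzDom_iff' [NormedAddCommGroup X] [NormedSpace ℝ X]
    (A : Set (X × (X →L[ℝ] ℝ))) (q : X × (X →L[ℝ] ℝ)) :
    q ∈ fitzDom A ↔ ∃ M : ℝ, ∀ a ∈ A, q.2 a.1 + a.2 q.1 - a.2 a.1 ≤ M := by
  constructor
  · intro hq
    obtain ⟨M, hM⟩ := ereal_exists_real_ge hq
    refine ⟨M, fun a ha => ?_⟩
    have hle := le_trans
      (le_iSup₂ (f := fun a (_ : a ∈ A) => ((q.2 a.1 + a.2 q.1 - a.2 a.1 : ℝ) : EReal)) a ha) hM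
    exact_mod_cast hle
  · rintro ⟨M, hM⟩
    refine lt_of_le_of_lt (iSup₂_le fun a ha => ?_) (EReal.coe_lt_top M)
    exact_mod_cast hM a ha

/-- Proposition: if `A` is maximally monotone of type (BR), then
`cl(dom A) = cl(P_X[dom F_A])` and `cl(ran A) = cl(P_{X*}[dom F_A])`; consequently
both `dom A` and `ran A` are nearly convex. -/
theorem closure_dom_ran_eq_proj_fitzDom_of_BR
    [NormedAddCommGroup X] [NormedSpace ℝ X] [CompleteSpace X]
    (A : Set (X × (X →L[ℝ] ℝ))) (hA : IsMaxMonotoneOp A) (hbr : IsBRtype A) :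
    closure (opDom A) = closure (Prod.fst '' fitzDom A) ∧
    closure (opRan A) = closure (Prod.snd '' fitzDom A) ∧
    Convex ℝ (closure (opDom A)) ∧ Convex ℝ (closure (opRan A)) := by
  classical
  -- A is nonempty
  have hne : A.Nonempty := by
    rcases Set.eq_empty_or_nonempty A with h | h
    · have : (0, 0) ∈ A := hA.2 (0, 0) (fun q hq => by simp [h] at hq)
      simp [h] at this
    · exact h
  -- the graph is contained in the Fitzpatrick domain
  have hAsub : A ⊆ fitzDom A := by
    intro a ha
    refine (mem_fitzDom_iff' A a).2 ⟨a.2 a.1, fun b hb => ?_⟩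
    have hmon := hA.1 a ha b hb
    simp only [ContinuousLinearMap.sub_apply, map_sub] at hmon
    linarith
  -- a real lower bound for the coupling over the graph, for points of fitzDom
  have hinf : ∀ q ∈ fitzDom A, ∃ c : ℝ, ∀ a ∈ A, c ≤ (q.2 - a.2) (q.1 - a.1) := by
    intro q hq
    obtain ⟨M, hM⟩ := (mem_fitzDom_iff' A q).1 hq
    refine ⟨q.2 q.1 - M, fun a ha => ?_⟩
    have := hM a ha
    simp only [ContinuousLinearMap.sub_apply, map_sub]
    linarith
  -- density of dom A in P_X dom F_A
  have hdom2 : Prod.fst '' fitzDom A ⊆ closure (opDom A) := by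
    rintro _ ⟨q, hq, rfl⟩
    rw [Metric.mem_closure_iff]
    intro ε hε
    obtain ⟨c, hc⟩ := hinf q hq
    have hβ : (0:ℝ) < (|c| + 1) / ε := by positivity
    have hlt : -(ε * ((|c| + 1) / ε)) < c := by
      rw [mul_div_cancel₀ _ (ne_of_gt hε)]
      have := abs_nonneg c
      cases abs_cases c with
      | inl h => linarith [h.1]
      | inr h => linarith [h.1]
    obtain ⟨b, hb, h1, _⟩ := hbr q.1 q.2 ε ((|c| + 1) / ε) hε hβ ⟨c, hlt, hc⟩
    exact ⟨b.1, ⟨b, hb, rfl⟩, by rwa [dist_eq_norm]⟩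
  -- density of ran A in P_{X*} dom F_A
  have hran2 : Prod.snd '' fitzDom A ⊆ closure (opRan A) := by
    rintro _ ⟨q, hq, rfl⟩
    rw [Metric.mem_closure_iff]
    intro ε hε
    obtain ⟨c, hc⟩ := hinf q hq
    have hα : (0:ℝ) < (|c| + 1) / ε := by positivity
    have hlt : -((|c| + 1) / ε * ε) < c := by
      rw [div_mul_cancel₀ _ (ne_of_gt hε)]
      cases abs_cases c with
      | inl h => linarith [h.1]
      | inr h => linarith [h.1]
    obtain ⟨b, hb, _, h2⟩ := hbr q.1 q.2 ((|c| + 1) / ε) ε hα hε ⟨c, hlt, hc⟩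
    exact ⟨b.2, ⟨b, hb, rfl⟩, by rwa [dist_eq_norm]⟩
  -- the two closure equalities
  have hdomEq : closure (opDom A) = closure (Prod.fst '' fitzDom A) := by
    apply le_antisymm
    · exact closure_mono (Set.image_mono hAsub)
    · exact closure_minimal hdom2 isClosed_closure
  have hranEq : closure (opRan A) = closure (Prod.snd '' fitzDom A) := by
    apply le_antisymm
    · exact closure_mono (Set.image_mono hAsub)
    · exact closure_minimal hran2 isClosed_closure
  -- convexity of fitzDom
  have hconv : Convex ℝ (fitzDom A) := by
    intro q hq r hr t s ht hs hts
    obtain ⟨M, hM⟩ := (mem_fitzDom_iff' A q).1 hq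
    obtain ⟨N, hN⟩ := (mem_fitzDom_iff' A r).1 hr
    refine (mem_fitzDom_iff' A _).2 ⟨t * M + s * N, fun a ha => ?_⟩
    have h1 := mul_le_mul_of_nonneg_left (hM a ha) ht
    have h2 := mul_le_mul_of_nonneg_left (hN a ha) hs
    simp only [Prod.smul_snd, Prod.smul_fst, Prod.snd_add, Prod.fst_add,
      ContinuousLinearMap.add_apply, ContinuousLinearMap.coe_smul',
      Pi.smul_apply, smul_eq_mul, map_add, map_smul]
    have h3 : t * (a.2 a.1) + s * (a.2 a.1) = a.2 a.1 := by
      rw [← add_mul, hts, one_mul]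
    nlinarith [h1, h2, h3]
  have hconvDom : Convex ℝ (closure (Prod.fst '' fitzDom A)) := by
    have : Convex ℝ ((LinearMap.fst ℝ X (X →L[ℝ] ℝ)) '' fitzDom A) :=
      hconv.linear_image _
    exact this.closure
  have hconvRan : Convex ℝ (closure (Prod.snd '' fitzDom A)) := by
    have : Convex ℝ ((LinearMap.snd ℝ X (X →L[ℝ] ℝ)) '' fitzDom A) :=
      hconv.linear_image _
    exact this.closure
  exact ⟨hdomEq, hranEq, hdomEq ▸ hconvDom, hranEq ▸ hconvRan⟩
end
end

section
/- Let X be a real Banach space and A : X ⇉ X* a maximally monotone operator. If z ∈ X satisfies z ∉ cl(conv(dom A)), then F_A(z,z*) = +∞ for every z* ∈ X*; that is, no point of dom F_A projects to z. -/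
open Set

noncomputable section

variable {X : Type*}

/-- Theorem: if `A` is maximally monotone and `z ∉ cl(conv(dom A))`, then
`F_A(z, z*) = +∞` for every `z*`; that is, no point of `dom F_A` projects to `z`. -/
theorem fitz_eq_top_of_not_mem_closure_convexHull
    [NormedAddCommGroup X] [NormedSpace ℝ X] [CompleteSpace X]
    (A : Set (X × (X →L[ℝ] ℝ))) (hA : IsMaxMonotoneOp A) (z : X)
    (hz : z ∉ closure (convexHull ℝ (opDom A))) :
    (∀ z' : X →L[ℝ] ℝ, fitz A z z' = ⊤) ∧ z ∉ Prod.fst '' fitzDom A := by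
  have key : ∀ z' : X →L[ℝ] ℝ, fitz A z z' = ⊤ := by
    intro z'
    by_contra h
    have hlt : fitz A z z' < ⊤ := lt_top_iff_ne_top.mpr h
    obtain ⟨M, hM, -⟩ := EReal.lt_iff_exists_real_btwn.mp hlt
    have hbound : ∀ a ∈ A, z' a.1 + a.2 z - a.2 a.1 ≤ M := by
      intro a ha
      have h1 : ((z' a.1 + a.2 z - a.2 a.1 : ℝ) : EReal) ≤ fitz A z z' := by
        exact le_biSup (fun a => ((z' a.1 + a.2 z - a.2 a.1 : ℝ) : EReal)) ha
      have := h1.trans_lt hM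
      exact_mod_cast this.le
    obtain ⟨f, u, hfu, huz⟩ := geometric_hahn_banach_closed_point
      ((convex_convexHull ℝ (opDom A)).closure) isClosed_closure hz
    set β := f z - u with hβ
    have hβpos : 0 < β := sub_pos.mpr huz
    set t := max 0 ((M - z' z) / β) with htdef
    have ht0 : 0 ≤ t := le_max_left _ _
    have h3 : M - z' z ≤ t * β := by
      rcases le_or_gt (M - z' z) 0 with hc | hc
      · nlinarith
      · have h4 : (M - z' z) / β ≤ t := le_max_right _ _
        calc M - z' z = (M - z' z) / β * β := by field_simp
          _ ≤ t * β := by nlinarith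
    have hmem : (z, z' + t • f) ∈ A := by
      apply hA.2
      intro q hq
      have hdom : q.1 ∈ opDom A := ⟨q, hq, rfl⟩
      have hfz : f q.1 < u :=
        hfu _ (subset_closure (subset_convexHull ℝ _ hdom))
      have h1 : q.2 z - q.2 q.1 ≤ M - z' q.1 := by
        have := hbound q hq; linarith
      have h2 : β ≤ f z - f q.1 := by linarith
      have htf : t * β ≤ t * (f z - f q.1) := mul_le_mul_of_nonneg_left h2 ht0
      simp only [ContinuousLinearMap.sub_apply, ContinuousLinearMap.add_apply,
        ContinuousLinearMap.smul_apply, smul_eq_mul, map_sub]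
      linarith
    have : z ∈ closure (convexHull ℝ (opDom A)) :=
      subset_closure (subset_convexHull ℝ _ ⟨_, hmem, rfl⟩)
    exact hz this
  refine ⟨key, ?_⟩
  rintro ⟨q, hq, rfl⟩
  rw [fitzDom, Set.mem_setOf_eq, key q.2] at hq
  exact lt_irrefl _ hq
end
end

section
/- Let X be a real Banach space, B : X ⇉ X* a maximally monotone operator, z ∈ X, and suppose there exist δ > 0 and y₀* ∈ X* with ‖y₀*‖ = 1 such that ⟨y₀*, z − b⟩ > δ for all b ∈ dom B. Then for every n ∈ ℕ there exists (bₙ, bₙ*) ∈ gra B with ⟨z − bₙ, bₙ*⟩ > nδ; consequently F_B(z,0) = +∞. -/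
open Set

noncomputable section

variable {X : Type*}

/-- Lemma: if `B` is maximally monotone and a norm-one functional `y₀*` separates `z`
from `dom B` with margin `δ > 0`, then for every `n ∈ ℕ` there is `(bₙ, bₙ*) ∈ gra B`
with `⟨z − bₙ, bₙ*⟩ > nδ`; consequently `F_B(z, 0) = +∞`. -/
theorem fitz_eq_top_of_separation
    [NormedAddCommGroup X] [NormedSpace ℝ X] [CompleteSpace X]
    (B : Set (X × (X →L[ℝ] ℝ))) (hB : IsMaxMonotoneOp B) (z : X)
    (δ : ℝ) (hδ : 0 < δ) (y0 : X →L[ℝ] ℝ) (hy0 : ‖y0‖ = 1)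
    (hsep : ∀ b ∈ opDom B, δ < y0 (z - b)) :
    (∀ n : ℕ, ∃ b ∈ B, (n : ℝ) * δ < b.2 (z - b.1)) ∧ fitz B z 0 = ⊤ := by
  have hz : z ∉ opDom B := by
    intro hzd
    have := hsep z hzd
    simp at this
    linarith
  have key : ∀ n : ℕ, ∃ b ∈ B, (n : ℝ) * δ < b.2 (z - b.1) := by
    intro n
    by_contra h
    push_neg at h
    have hmon : MonRel (z, (n : ℝ) • y0) B := by
      intro q hq
      have h1 : q.2 (z - q.1) ≤ (n : ℝ) * δ := h q hq
      have h2 : δ < y0 (z - q.1) := hsep q.1 ⟨q, hq, rfl⟩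
      have h3 : (n : ℝ) * δ ≤ (n : ℝ) * y0 (z - q.1) :=
        mul_le_mul_of_nonneg_left (le_of_lt h2) (Nat.cast_nonneg n)
      simp only [ContinuousLinearMap.sub_apply, ContinuousLinearMap.smul_apply, smul_eq_mul]
      linarith
    exact hz ⟨_, hB.2 _ hmon, rfl⟩
  refine ⟨key, ?_⟩
  rw [EReal.eq_top_iff_forall_lt]
  intro r
  obtain ⟨n, hn⟩ := exists_nat_gt (r / δ)
  obtain ⟨b, hb, hbval⟩ := key n
  have hr : r < b.2 (z - b.1) := by
    have : r < (n : ℝ) * δ := by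
      rw [div_lt_iff₀ hδ] at hn; linarith
    linarith
  calc (r : EReal) < ((b.2 (z - b.1) : ℝ) : EReal) := by exact_mod_cast hr
    _ = (((0 : X →L[ℝ] ℝ) b.1 + b.2 z - b.2 b.1 : ℝ) : EReal) := by
        norm_num [map_sub]
    _ ≤ fitz B z 0 := le_iSup₂ (f := fun a (_ : a ∈ B) =>
        (((0 : X →L[ℝ] ℝ) a.1 + a.2 z - a.2 a.1 : ℝ) : EReal)) b hb
end
end

section
/- Let X be a real Banach space, 1 ≤ p < ∞, A : X ⇉ X* an operator with nonempty graph, and z ∈ X with α := dist(z, dom A) > 0. Suppose for every sufficiently large λ > 0 the pair (z,0) is not monotonically related to the graph of A + λ J_p(· − z). Then sup_{(a,a*)∈gra A} ⟨z − a, a*⟩/‖z − a‖ = +∞. -/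
open Set

noncomputable section

variable {X : Type*}

/-- Lemma: if `α := dist(z, dom A) > 0` and for all sufficiently large `λ > 0` the
pair `(z, 0)` is not monotonically related to `gra (A + λ J_p(· − z))`, then
`sup_{(a,a*)∈gra A} ⟨z − a, a*⟩/‖z − a‖ = +∞`. -/
theorem sup_unbounded_of_not_monRel
    [NormedAddCommGroup X] [NormedSpace ℝ X] [CompleteSpace X]
    (p : ℝ) (hp : 1 ≤ p)
    (A : Set (X × (X →L[ℝ] ℝ))) (hne : A.Nonempty) (z : X)
    (hdist : 0 < Metric.infDist z (opDom A))
    (h : ∃ Λ : ℝ, 0 < Λ ∧ ∀ lam : ℝ, Λ ≤ lam →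
      ¬ MonRel (z, (0 : X →L[ℝ] ℝ)) (sumGraph A lam p z)) :
    ∀ M : ℝ, ∃ a ∈ A, M < a.2 (z - a.1) / ‖z - a.1‖ := by
  obtain ⟨Λ, hΛ, hmr⟩ := h
  intro M
  set α := Metric.infDist z (opDom A) with hαdef
  have hppos : (0 : ℝ) < p := by linarith
  have hαpow : 0 < α ^ (p - 1) := Real.rpow_pos_of_pos hdist _
  set lam := max Λ (p * (|M| + 1) / α ^ (p - 1)) with hlamdef
  have hlamΛ : Λ ≤ lam := le_max_left _ _
  have hlampos : 0 < lam := lt_of_lt_of_le hΛ hlamΛ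
  have hlamM : |M| + 1 ≤ lam * α ^ (p - 1) / p := by
    have h1 := le_max_right Λ (p * (|M| + 1) / α ^ (p - 1))
    rw [div_le_iff₀ hαpow] at h1
    rw [le_div_iff₀ hppos]
    linarith
  have hnm := hmr lam hlamΛ
  rw [MonRel] at hnm
  push_neg at hnm
  obtain ⟨q, hq, hneg⟩ := hnm
  obtain ⟨a', b', hA, hJ, hq2⟩ := hq
  refine ⟨(q.1, a'), hA, ?_⟩
  simp only at hneg ⊢
  set x := q.1 with hx
  set r := ‖z - x‖ with hr
  have hxdom : x ∈ opDom A := ⟨(x, a'), hA, rfl⟩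
  have hαr : α ≤ r := by
    have := Metric.infDist_le_dist_of_mem (x := z) hxdom
    rwa [dist_eq_norm] at this
  have hrpos : 0 < r := lt_of_lt_of_le hdist hαr
  -- from Jmap with y = 0
  have hbr : b' (z - x) ≤ -(r ^ p / p) := by
    have hb := hJ 0
    rw [norm_zero, Real.zero_rpow hppos.ne', zero_sub, map_neg, zero_div] at hb
    have hnorm : ‖x - z‖ = r := by rw [hr, norm_sub_rev]
    rw [hnorm] at hb
    have hzx : b' (z - x) = -(b' (x - z)) := by rw [← map_neg, neg_sub]
    linarith
  -- from hneg
  have hneg2 : 0 < a' (z - x) + lam * b' (z - x) := by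
    rw [hq2] at hneg
    simp only [ContinuousLinearMap.sub_apply, ContinuousLinearMap.zero_apply,
      ContinuousLinearMap.add_apply, ContinuousLinearMap.coe_smul', Pi.smul_apply,
      smul_eq_mul] at hneg
    linarith
  have hkey : lam * (r ^ p / p) < a' (z - x) := by
    nlinarith [mul_le_mul_of_nonneg_left hbr hlampos.le]
  have hrp : r ^ (p - 1) = r ^ p / r := by
    rw [Real.rpow_sub hrpos, Real.rpow_one]
  have hchain : lam * α ^ (p - 1) / p ≤ lam * r ^ (p - 1) / p := by
    have hle : α ^ (p - 1) ≤ r ^ (p - 1) :=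
      Real.rpow_le_rpow hdist.le hαr (by linarith)
    gcongr
  have hfin : lam * r ^ (p - 1) / p < a' (z - x) / r := by
    have heq : lam * r ^ (p - 1) / p = lam * (r ^ p / p) / r := by
      rw [hrp]; field_simp
    rw [heq]
    exact div_lt_div_of_pos_right hkey hrpos
  have hM : M < |M| + 1 := by
    have := le_abs_self M; linarith
  linarith
end
end

section
/- Let X be a real Banach space and A : X ⇉ X* a monotone operator with nonempty graph. If (z,z*) ∈ dom F_A and dist(z, dom A) > 0, then sup_{(a,a*)∈gra A} ⟨z − a, a*⟩/‖z − a‖ ≤ ‖z*‖ − r < +∞ for some r ∈ ℝ; in particular the supremum sup_{(a,a*)∈gra A} ⟨z − a, a*⟩/‖z − a‖ is finite. -/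
open Set

noncomputable section

variable {X : Type*}

/-- Lemma: if `A` is monotone with nonempty graph, `(z, z*) ∈ dom F_A` and
`dist(z, dom A) > 0`, then there is `r ∈ ℝ` with
`sup_{(a,a*)∈gra A} ⟨z − a, a*⟩/‖z − a‖ ≤ ‖z*‖ − r < +∞`; in particular this
supremum is finite. -/
theorem sup_bounded_of_mem_fitzDom
    [NormedAddCommGroup X] [NormedSpace ℝ X] [CompleteSpace X]
    (A : Set (X × (X →L[ℝ] ℝ))) (hne : A.Nonempty) (hmono : IsMonotoneOp A)
    (z : X) (z' : X →L[ℝ] ℝ) (hdom : (z, z') ∈ fitzDom A)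
    (hdist : 0 < Metric.infDist z (opDom A)) :
    ∃ r : ℝ, ∀ a ∈ A, a.2 (z - a.1) / ‖z - a.1‖ ≤ ‖z'‖ - r := by
  have hfin : fitz A z z' ≠ ⊤ := ne_of_lt hdom
  set M := (fitz A z z').toReal with hM
  have key : ∀ a ∈ A, z' a.1 + a.2 z - a.2 a.1 ≤ M := by
    intro a ha
    have h1 : ((z' a.1 + a.2 z - a.2 a.1 : ℝ) : EReal) ≤ fitz A z z' := by
      exact le_iSup₂_of_le a ha le_rfl
    have h2 := h1.trans (EReal.le_coe_toReal hfin)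
    exact_mod_cast h2
  set d := Metric.infDist z (opDom A) with hd
  set C := M - z' z with hC
  refine ⟨-(max C 0 / d), ?_⟩
  intro a ha
  have hn : d ≤ ‖z - a.1‖ := by
    have hmem : a.1 ∈ opDom A := ⟨a, ha, rfl⟩
    calc d ≤ dist z a.1 := Metric.infDist_le_dist_of_mem hmem
      _ = ‖z - a.1‖ := by rw [dist_eq_norm]
  have hnpos : 0 < ‖z - a.1‖ := lt_of_lt_of_le hdist hn
  have hbound : a.2 (z - a.1) ≤ C + ‖z'‖ * ‖z - a.1‖ := by
    have h1 := key a ha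
    have h2 := z'.le_opNorm (z - a.1)
    rw [Real.norm_eq_abs] at h2
    have h2' : z' (z - a.1) ≤ ‖z'‖ * ‖z - a.1‖ := (le_abs_self _).trans h2
    have h3 : a.2 (z - a.1) = a.2 z - a.2 a.1 := by rw [map_sub]
    have h4 : z' (z - a.1) = z' z - z' a.1 := by rw [map_sub]
    linarith
  rw [div_le_iff₀ hnpos, sub_neg_eq_add]
  have hK : 0 ≤ max C 0 / d := div_nonneg (le_max_right _ _) hdist.le
  have hmax : max C 0 ≤ (max C 0 / d) * ‖z - a.1‖ := by
    have heq : max C 0 = (max C 0 / d) * d := by field_simp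
    nlinarith
  nlinarith [le_max_left C 0, norm_nonneg z']
end
end
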